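/- arXiv:1309.1290 — 3 statements merged into one kernel-verified Lean document; each statement's English description precedes it below -/
import Mathlib

section
/- A word w ∈ Γ* is reduced if and only if w is α-reduced for every α ∈ L. -/
/-- The set of commutator relators defining a graph product. -/
def gpRels {L : Type} (I : L → L → Prop) (G : L → Type) [∀ α, Group (G α)] :
    Set (Monoid.CoprodI G) :=
  {x | ∃ (α β : L) (g : G α) (h : G β), I α β ∧
    x = Monoid.CoprodI.of g * Monoid.CoprodI.of h *
        (Monoid.CoprodI.of g)⁻¹ * (Monoid.CoprodI.of h)⁻¹}

/-- The graph product of the groups `G α` over the independence relation `I`. -/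
def GP {L : Type} (I : L → L → Prop) (G : L → Type) [∀ α, Group (G α)] : Type :=
  Monoid.CoprodI G ⧸ Subgroup.normalClosure (gpRels I G)

instance {L : Type} (I : L → L → Prop) (G : L → Type) [∀ α, Group (G α)] :
    Group (GP I G) := QuotientGroup.Quotient.group _

/-- The canonical homomorphism of a node group into the graph product. -/
def gpOf {L : Type} (I : L → L → Prop) (G : L → Type) [∀ α, Group (G α)] (α : L) :
    G α →* GP I G :=
  (QuotientGroup.mk' _).comp Monoid.CoprodI.of

/-- A letter: a nontrivial element of one of the node groups. -/
abbrev Letter (L : Type) (G : L → Type) [∀ α, Group (G α)] : Type :=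
  Σ α : L, {g : G α // g ≠ 1}

variable {L : Type} (I : L → L → Prop) (G : L → Type) [∀ α, Group (G α)]

/-- The element of the graph product represented by a word. -/
def evalWord (w : List (Letter L G)) : GP I G :=
  (w.map fun l => gpOf I G l.1 l.2.1).prod

/-- One elementary commutation step between trace-equivalent words. -/
inductive TraceStep : List (Letter L G) → List (Letter L G) → Prop
  | swap (u v : List (Letter L G)) (a b : Letter L G) (h : I a.1 b.1) :
      TraceStep (u ++ a :: b :: v) (u ++ b :: a :: v)

/-- Trace equivalence: the congruence generated by commuting independent letters. -/
def TraceEquiv : List (Letter L G) → List (Letter L G) → Prop :=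
  Relation.EqvGen (TraceStep I G)

/-- `IndepWord I G β u` means every letter of `u` is independent of `β`,
i.e. `u ∈ I(β)`. -/
def IndepWord (β : L) (u : List (Letter L G)) : Prop := ∀ c ∈ u, I c.1 β

/-- A word is reduced if it contains no factor `b u b'` with `b, b' ∈ Γ_β`
and `u ∈ I(β)`. -/
def Reduced (w : List (Letter L G)) : Prop :=
  ¬ ∃ (β : L) (b b' : {g : G β // g ≠ 1}) (x u y : List (Letter L G)),
      w = x ++ (⟨β, b⟩ : Letter L G) :: (u ++ (⟨β, b'⟩ : Letter L G) :: y) ∧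
      IndepWord I G β u

/-- `|w|_α` : number of letters of `w` in `Γ_α`. -/
noncomputable def countAlpha (α : L) (w : List (Letter L G)) : ℕ :=
  (w.filter fun l => Classical.propDecidable (l.1 = α) |>.decide).length

/-- The alphabet `al(w)` of a word. -/
def alph (w : List (Letter L G)) : Set L := {α | ∃ l ∈ w, l.1 = α}

/-- A reduced word is cyclically reduced if it has no factorization `≡ a v a'`
with `a, a'` letters from the same node group. -/
def IsCyclicallyReduced (w : List (Letter L G)) : Prop :=
  Reduced I G w ∧
  ¬ ∃ (α : L) (a a' : {g : G α // g ≠ 1}) (v : List (Letter L G)),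
      TraceEquiv I G w ((⟨α, a⟩ : Letter L G) :: (v ++ [(⟨α, a'⟩ : Letter L G)]))

/-- Words `u` and `v` are transposed if `u ≡ r s` and `v ≡ s r`. -/
def Transposed (u v : List (Letter L G)) : Prop :=
  ∃ r s : List (Letter L G), TraceEquiv I G u (r ++ s) ∧ TraceEquiv I G v (s ++ r)

/-- `u ≈ v` : the reflexive-transitive closure of transposition. -/
def TransClosure : List (Letter L G) → List (Letter L G) → Prop :=
  Relation.ReflTransGen (Transposed I G)

/-- The formal inverse of a letter. -/
def letterInv (l : Letter L G) : Letter L G :=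
  ⟨l.1, ⟨(l.2 : G l.1)⁻¹, inv_ne_one.mpr l.2.2⟩⟩

/-- The formal inverse `p̄` of a word `p`. -/
def wordInv (w : List (Letter L G)) : List (Letter L G) :=
  (w.map (letterInv G)).reverse

/-- The dependence graph on `L`: distinct nodes are adjacent iff not independent. -/
def depGraph : SimpleGraph L where
  Adj a b := a ≠ b ∧ ¬ I a b ∧ ¬ I b a
  symm := by
    constructor
    intro a b ⟨h1, h2, h3⟩
    exact ⟨h1.symm, h3, h2⟩
  loopless := by constructor; intro a ⟨h1, _⟩; exact h1 rfl

/-- A word is connected if its alphabet induces a connected subgraph of the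
dependence graph. -/
def ConnectedWord (w : List (Letter L G)) : Prop :=
  ((depGraph I).induce (alph G w)).Connected

/-- A word `w` is `α`-reduced if every word with fewer letters from `Γ_α`
represents a different element of the graph product. -/
def AlphaReduced (α : L) (w : List (Letter L G)) : Prop :=
  ∀ w' : List (Letter L G), countAlpha G α w' < countAlpha G α w →
    evalWord I G w' ≠ evalWord I G w

section Dev
variable {L : Type} {I : L → L → Prop} {G : L → Type} [∀ α, Group (G α)]

local notation "W" => List (Letter L G)

lemma gpOf_comm {α β : L} (h : I α β) (g : G α) (k : G β) :
    gpOf I G α g * gpOf I G β k = gpOf I G β k * gpOf I G α g := by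
  have hrel : (Monoid.CoprodI.of g * Monoid.CoprodI.of k * (Monoid.CoprodI.of g)⁻¹ *
      (Monoid.CoprodI.of k)⁻¹) ∈ Subgroup.normalClosure (gpRels I G) :=
    Subgroup.subset_normalClosure ⟨α, β, g, k, h, rfl⟩
  have h1 : gpOf I G α g * gpOf I G β k * (gpOf I G α g)⁻¹ * (gpOf I G β k)⁻¹ = 1 := by
    have := (QuotientGroup.eq_one_iff _).mpr hrel
    exact this
  rw [mul_inv_eq_one, mul_inv_eq_iff_eq_mul] at h1
  exact h1

lemma evalWord_nil : evalWord I G [] = 1 := rfl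

lemma evalWord_cons (l : Letter L G) (w : W) :
    evalWord I G (l :: w) = gpOf I G l.1 l.2.1 * evalWord I G w := by
  simp [evalWord]

lemma evalWord_append (u v : W) :
    evalWord I G (u ++ v) = evalWord I G u * evalWord I G v := by
  simp [evalWord]

lemma evalWord_comm_indep (hsym : ∀ α β, I α β → I β α) {β : L} {u : W}
    (hu : IndepWord I G β u) (g : G β) :
    gpOf I G β g * evalWord I G u = evalWord I G u * gpOf I G β g := by
  induction u with
  | nil => simp [evalWord_nil]
  | cons c t ih =>
    have hc : I c.1 β := hu c List.mem_cons_self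
    have ht : IndepWord I G β t := fun d hd => hu d (List.mem_cons_of_mem c hd)
    rw [evalWord_cons, ← mul_assoc, gpOf_comm (hsym _ _ hc), mul_assoc, ih ht,
      ← mul_assoc]

lemma countAlpha_append (α : L) (u v : W) :
    countAlpha G α (u ++ v) = countAlpha G α u + countAlpha G α v := by
  simp [countAlpha]

lemma countAlpha_cons_eq {α : L} {l : Letter L G} (h : l.1 = α) (w : W) :
    countAlpha G α (l :: w) = countAlpha G α w + 1 := by
  have hd : (Classical.propDecidable (l.1 = α)).decide = true := @decide_eq_true _ (Classical.propDecidable _) h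
  simp [countAlpha, List.filter_cons, hd, Nat.add_comm]

lemma countAlpha_cons_ne {α : L} {l : Letter L G} (h : ¬ l.1 = α) (w : W) :
    countAlpha G α (l :: w) = countAlpha G α w := by
  have hd : (Classical.propDecidable (l.1 = α)).decide = false := @decide_eq_false _ (Classical.propDecidable _) h
  simp [countAlpha, List.filter_cons, hd]

lemma countAlpha_eq_of_perm (α : L) {u v : W} (h : u.Perm v) :
    countAlpha G α u = countAlpha G α v := by
  simpa [countAlpha] using (h.filter _).length_eq

end Dev
section Dev2
variable {L : Type} {I : L → L → Prop} {G : L → Type} [∀ α, Group (G α)]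

local notation "W" => List (Letter L G)

lemma te_refl (u : W) : TraceEquiv I G u u := Relation.EqvGen.refl u

lemma te_rel {u v : W} (h : TraceStep I G u v) : TraceEquiv I G u v :=
  Relation.EqvGen.rel u v h

lemma te_symm {u v : W} (h : TraceEquiv I G u v) : TraceEquiv I G v u :=
  Relation.EqvGen.symm u v h

lemma te_trans {u v w : W} (h1 : TraceEquiv I G u v) (h2 : TraceEquiv I G v w) :
    TraceEquiv I G u w := Relation.EqvGen.trans u v w h1 h2

lemma traceStep_symm (hsym : ∀ α β, I α β → I β α) {u v : W}
    (h : TraceStep I G u v) : TraceStep I G v u := by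
  cases h with
  | swap x y a b hab => exact TraceStep.swap x y b a (hsym _ _ hab)

lemma te_app_left (x : W) {u v : W} (h : TraceEquiv I G u v) :
    TraceEquiv I G (x ++ u) (x ++ v) := by
  induction h with
  | rel u v h =>
    cases h with
    | swap s t a b hab =>
      refine te_rel ?_
      rw [← List.append_assoc, ← List.append_assoc]
      exact TraceStep.swap (x ++ s) t a b hab
  | refl u => exact te_refl _
  | symm u v _ ih => exact te_symm ih
  | trans u v w _ _ ih1 ih2 => exact te_trans ih1 ih2

lemma te_app_right (y : W) {u v : W} (h : TraceEquiv I G u v) :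
    TraceEquiv I G (u ++ y) (v ++ y) := by
  induction h with
  | rel u v h =>
    cases h with
    | swap s t a b hab =>
      refine te_rel ?_
      rw [List.append_assoc, List.append_assoc]
      exact TraceStep.swap s (t ++ y) a b hab
  | refl u => exact te_refl _
  | symm u v _ ih => exact te_symm ih
  | trans u v w _ _ ih1 ih2 => exact te_trans ih1 ih2

lemma te_swap_pair {a b : Letter L G} (hab : I a.1 b.1) (x y : W) :
    TraceEquiv I G (x ++ a :: b :: y) (x ++ b :: a :: y) :=
  te_rel (TraceStep.swap x y a b hab)

/-- Move a letter independent from everything in `x` through `x`. -/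
lemma te_move (hsym : ∀ α β, I α β → I β α) {α : L} {x : W}
    (hx : IndepWord I G α x) (c : Letter L G) (hc : c.1 = α) (y : W) :
    TraceEquiv I G (c :: (x ++ y)) (x ++ c :: y) := by
  induction x with
  | nil => exact te_refl _
  | cons d t ih =>
    have hd : I c.1 d.1 := by
      rw [hc]; exact hsym _ _ (hx d List.mem_cons_self)
    have ht : IndepWord I G α t := fun e he => hx e (List.mem_cons_of_mem d he)
    refine te_trans (te_swap_pair (x := []) hd (t ++ y)) ?_
    exact te_app_left [d] (ih ht)

lemma perm_of_te {u v : W} (h : TraceEquiv I G u v) : u.Perm v := by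
  induction h with
  | rel u v h =>
    cases h with
    | swap s t a b hab => exact (List.Perm.swap b a t).append_left s
  | refl u => exact List.Perm.refl u
  | symm u v _ ih => exact ih.symm
  | trans u v w _ _ ih1 ih2 => exact ih1.trans ih2

lemma countAlpha_eq_of_te (α : L) {u v : W} (h : TraceEquiv I G u v) :
    countAlpha G α u = countAlpha G α v :=
  countAlpha_eq_of_perm α (perm_of_te h)

/-- Master splitting lemma: if `A ++ B = X ++ c :: R` then the marked letter
is inside `A` or inside `B`. -/
lemma split_mid {A B X R : W} {c : Letter L G} (h : A ++ B = X ++ c :: R) :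
    (∃ m, A = X ++ c :: m ∧ R = m ++ B) ∨ (∃ m, X = A ++ m ∧ B = m ++ c :: R) := by
  rcases List.append_eq_append_iff.mp h with ⟨m, hm1, hm2⟩ | ⟨m, hm1, hm2⟩
  · exact Or.inr ⟨m, hm1, hm2⟩
  · cases m with
    | nil =>
      simp only [List.append_nil] at hm1
      rw [List.nil_append] at hm2
      exact Or.inr ⟨[], by simp [hm1], by simp [hm2]⟩
    | cons d m' =>
      rw [List.cons_append] at hm2
      injection hm2 with h1 h2
      subst h1
      exact Or.inl ⟨m', by simpa using hm1, h2⟩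

/-- Compare a swap decomposition with a marked-letter decomposition. -/
lemma two_decomp {s t x y : W} {p q a : Letter L G}
    (h : s ++ p :: q :: t = x ++ a :: y) :
    (∃ m, x = s ++ p :: q :: m ∧ t = m ++ a :: y) ∨
    (s = x ∧ p = a ∧ y = q :: t) ∨
    (x = s ++ [p] ∧ q = a ∧ t = y) ∨
    (∃ m, s = x ++ a :: m ∧ y = m ++ p :: q :: t) := by
  rcases split_mid (A := s) (B := p :: q :: t) h with ⟨m, hm1, hm2⟩ | ⟨m, hm1, hm2⟩
  · exact Or.inr (Or.inr (Or.inr ⟨m, hm1, hm2⟩))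
  · cases m with
    | nil =>
      rw [List.append_nil] at hm1
      rw [List.nil_append] at hm2
      injection hm2 with h1 h2
      exact Or.inr (Or.inl ⟨hm1.symm, h1, h2.symm⟩)
    | cons d m' =>
      rw [List.cons_append] at hm2
      injection hm2 with h1 hm2
      subst h1
      cases m' with
      | nil =>
        rw [List.nil_append] at hm2
        injection hm2 with h2 h3
        subst h2; subst h3
        exact Or.inr (Or.inr (Or.inl ⟨by simpa using hm1, rfl, rfl⟩))
      | cons e m'' =>
        rw [List.cons_append] at hm2
        injection hm2 with h2 hm3
        subst h2
        exact Or.inl ⟨m'', by simpa using hm1, hm3⟩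

end Dev2
section Dev3
variable {L : Type} (I : L → L → Prop) (G : L → Type) [∀ α, Group (G α)]

local notation "W" => List (Letter L G)

/-- `u` has a leading `Γ_α` letter: `u = x ++ a :: y` with `x ∈ I(α)`. -/
def HasHead (α : L) (u : W) : Prop :=
  ∃ (x : W) (a : {g : G α // g ≠ 1}) (y : W),
    u = x ++ (⟨α, a⟩ : Letter L G) :: y ∧ IndepWord I G α x

variable {I G}

lemma not_reduced_iff {w : W} :
    ¬ Reduced I G w ↔ ∃ (β : L) (b : {g : G β // g ≠ 1}) (x r : W),
      w = x ++ (⟨β, b⟩ : Letter L G) :: r ∧ HasHead I G β r := by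
  rw [Reduced, not_not]
  constructor
  · rintro ⟨β, b, b', x, u, y, rfl, hu⟩
    exact ⟨β, b, x, u ++ (⟨β, b'⟩ : Letter L G) :: y, rfl, u, b', y, rfl, hu⟩
  · rintro ⟨β, b, x, r, rfl, u, b', y, rfl, hu⟩
    exact ⟨β, b, b', x, u, y, rfl, hu⟩

lemma bad_of_pattern {w x r : W} {β : L} {b : {g : G β // g ≠ 1}}
    (hw : w = x ++ (⟨β, b⟩ : Letter L G) :: r) (hr : HasHead I G β r) :
    ¬ Reduced I G w :=
  not_reduced_iff.mpr ⟨β, b, x, r, hw, hr⟩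

lemma head_unique (hirr : ∀ α, ¬ I α α) {α : L} {x y x' y' : W}
    {a a' : {g : G α // g ≠ 1}}
    (h : x ++ (⟨α, a⟩ : Letter L G) :: y = x' ++ (⟨α, a'⟩ : Letter L G) :: y')
    (hx : IndepWord I G α x) (hx' : IndepWord I G α x') :
    x = x' ∧ a = a' ∧ y = y' := by
  rcases split_mid h with ⟨m, hm1, hm2⟩ | ⟨m, hm1, hm2⟩
  · exfalso
    have hmem : (⟨α, a'⟩ : Letter L G) ∈ x := by rw [hm1]; simp
    exact hirr α (hx _ hmem)
  · cases m with
    | nil =>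
      rw [List.append_nil] at hm1
      rw [List.nil_append] at hm2
      injection hm2 with h1 h2
      injection h1 with e1 e2
      exact ⟨hm1.symm, e2, h2⟩
    | cons d m' =>
      exfalso
      rw [List.cons_append] at hm2
      injection hm2 with h1 h2
      have hmem : (⟨α, a⟩ : Letter L G) ∈ x' := by rw [hm1, ← h1]; simp
      exact hirr α (hx' _ hmem)

lemma reduced_tail {l : Letter L G} {t : W} (h : Reduced I G (l :: t)) :
    Reduced I G t := by
  rintro ⟨β, b, b', x, u, y, ht, hu⟩
  exact h ⟨β, b, b', l :: x, u, y, by rw [ht]; rfl, hu⟩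

lemma reduced_cons_nohead {l : Letter L G} {t : W} (h : Reduced I G (l :: t)) :
    ¬ HasHead I G l.1 t := by
  rintro ⟨x, a, y, ht, hx⟩
  refine h ⟨l.1, l.2, a, [], x, y, ?_, hx⟩
  rw [ht]; rfl

lemma hasHead_cons_cases {α : L} {l : Letter L G} {u : W}
    (h : HasHead I G α (l :: u)) :
    (∃ a : {g : G α // g ≠ 1}, l = (⟨α, a⟩ : Letter L G)) ∨
    (I l.1 α ∧ HasHead I G α u) := by
  obtain ⟨x, a, y, hu, hx⟩ := h
  cases x with
  | nil =>
    rw [List.nil_append] at hu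
    injection hu with h1 h2
    exact Or.inl ⟨a, h1⟩
  | cons d x' =>
    rw [List.cons_append] at hu
    injection hu with h1 h2
    subst h1
    exact Or.inr ⟨hx l List.mem_cons_self,
      x', a, y, h2, fun c hc => hx c (List.mem_cons_of_mem _ hc)⟩

lemma reduced_cons_of {l : Letter L G} {t : W} (ht : Reduced I G t)
    (hh : ¬ HasHead I G l.1 t) : Reduced I G (l :: t) := by
  rintro ⟨β, b, b', x, u, y, hw, hu⟩
  cases x with
  | nil =>
    rw [List.nil_append] at hw
    injection hw with h1 h2
    subst h1
    exact hh ⟨u, b', y, h2, hu⟩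
  | cons d x' =>
    rw [List.cons_append] at hw
    injection hw with h1 h2
    exact ht ⟨β, b, b', x', u, y, h2, hu⟩

lemma bad_replace {x y : W} {α : L} {a a' : {g : G α // g ≠ 1}}
    (h : ¬ Reduced I G (x ++ (⟨α, a⟩ : Letter L G) :: y)) :
    ¬ Reduced I G (x ++ (⟨α, a'⟩ : Letter L G) :: y) := by
  rcases not_reduced_iff.mp h with ⟨β, b, X, r, hw, hr⟩
  obtain ⟨U, c, Y, rfl, hU⟩ := hr
  rcases split_mid (A := x) hw with ⟨m, hm1, hm2⟩ | ⟨m, hm1, hm2⟩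
  · -- ⟨β,b⟩ inside x
    rcases split_mid (A := U) hm2 with ⟨m2, hn1, hn2⟩ | ⟨m2, hn1, hn2⟩
    · -- ⟨α,a⟩ inside U
      refine bad_of_pattern (x := X) (β := β) (b := b)
        (r := (m ++ (⟨α, a'⟩ : Letter L G) :: m2) ++ (⟨β, c⟩ : Letter L G) :: Y)
        ?_ ⟨m ++ (⟨α, a'⟩ : Letter L G) :: m2, c, Y, rfl, ?_⟩
      · rw [hm1, hn2]; simp
      · intro d hd
        rcases List.mem_append.mp hd with hd | hd
        · exact hU d (by rw [hn1]; simp [hd])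
        · rcases List.mem_cons.mp hd with rfl | hd
          · exact hU (⟨α, a⟩ : Letter L G) (by rw [hn1]; simp)
          · exact hU d (by rw [hn1]; simp [hd])
    · cases m2 with
      | nil =>
        rw [List.nil_append] at hn2
        injection hn2 with e1 e2
        injection e1 with f1 f2
        subst f1
        rw [List.append_nil] at hn1
        refine bad_of_pattern (x := X) (β := β) (b := b)
          (r := U ++ (⟨β, a'⟩ : Letter L G) :: y) ?_ ⟨U, a', y, rfl, hU⟩
        rw [hm1, hn1]; simp
      | cons e m3 =>
        rw [List.cons_append] at hn2
        injection hn2 with e1 e2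
        subst e1
        refine bad_of_pattern (x := X) (β := β) (b := b)
          (r := U ++ (⟨β, c⟩ : Letter L G) :: (m3 ++ (⟨α, a'⟩ : Letter L G) :: y))
          ?_ ⟨U, c, _, rfl, hU⟩
        rw [hm1, hn1]; simp
  · cases m with
    | nil =>
      rw [List.nil_append] at hm2
      injection hm2 with e1 e2
      injection e1 with f1 f2
      subst f1
      exact bad_of_pattern (x := x) (β := α) (b := a')
        (r := U ++ (⟨α, c⟩ : Letter L G) :: Y) (by rw [e2]) ⟨U, c, Y, rfl, hU⟩
    | cons d m' =>
      rw [List.cons_append] at hm2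
      injection hm2 with e1 e2
      subst e1
      exact bad_of_pattern (x := x ++ (⟨α, a'⟩ : Letter L G) :: m') (β := β) (b := b)
        (r := U ++ (⟨β, c⟩ : Letter L G) :: Y)
        (by rw [e2]; simp) ⟨U, c, Y, rfl, hU⟩

end Dev3
section Dev4
variable {L : Type} {I : L → L → Prop} {G : L → Type} [∀ α, Group (G α)]

local notation "W" => List (Letter L G)

lemma hasHead_replace {x y : W} {α β : L} {a a' : {g : G α // g ≠ 1}}
    (h : HasHead I G β (x ++ (⟨α, a⟩ : Letter L G) :: y)) :
    HasHead I G β (x ++ (⟨α, a'⟩ : Letter L G) :: y) := by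
  obtain ⟨X, c, R, hw, hX⟩ := h
  rcases split_mid (A := x) hw with ⟨m, hm1, hm2⟩ | ⟨m, hm1, hm2⟩
  · exact ⟨X, c, m ++ (⟨α, a'⟩ : Letter L G) :: y, by rw [hm1]; simp, hX⟩
  · cases m with
    | nil =>
      rw [List.nil_append] at hm2
      injection hm2 with e1 e2
      injection e1 with f1 f2
      subst f1
      rw [List.append_nil] at hm1
      exact ⟨x, a', y, rfl, hm1 ▸ hX⟩
    | cons d m' =>
      rw [List.cons_append] at hm2
      injection hm2 with e1 e2
      subst e1
      refine ⟨x ++ (⟨α, a'⟩ : Letter L G) :: m', c, R, by rw [e2]; simp, ?_⟩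
      intro d hd
      rcases List.mem_append.mp hd with hd | hd
      · exact hX d (by rw [hm1]; simp [hd])
      · rcases List.mem_cons.mp hd with rfl | hd
        · exact hX (⟨α, a⟩ : Letter L G) (by rw [hm1]; simp)
        · exact hX d (by rw [hm1]; simp [hd])

lemma reduced_delete (hsym : ∀ α β, I α β → I β α) {x y : W} {α : L}
    {a : {g : G α // g ≠ 1}}
    (h : Reduced I G (x ++ (⟨α, a⟩ : Letter L G) :: y)) (hx : IndepWord I G α x) :
    Reduced I G (x ++ y) := by
  rintro ⟨β, b, c, X, U, Y, hw, hU⟩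
  rcases split_mid (A := x) hw with ⟨m, hm1, hm2⟩ | ⟨m, hm1, hm2⟩
  · rcases split_mid (A := m) (B := y) hm2.symm with ⟨m2, hn1, hn2⟩ | ⟨m2, hn1, hn2⟩
    · exact h ⟨β, b, c, X, U, m2 ++ (⟨α, a⟩ : Letter L G) :: y,
        by rw [hm1, hn1]; simp, hU⟩
    · refine h ⟨β, b, c, X, m ++ (⟨α, a⟩ : Letter L G) :: m2, Y,
        by rw [hm1, hn2]; simp, ?_⟩
      intro d hd
      rcases List.mem_append.mp hd with hd | hd
      · exact hU d (by rw [hn1]; simp [hd])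
      · rcases List.mem_cons.mp hd with rfl | hd
        · exact hsym _ _ (hx (⟨β, b⟩ : Letter L G) (by rw [hm1]; simp))
        · exact hU d (by rw [hn1]; simp [hd])
  · exact h ⟨β, b, c, x ++ (⟨α, a⟩ : Letter L G) :: m, U, Y, by rw [hm2]; simp, hU⟩

lemma nohead_cancel_self (hirr : ∀ α, ¬ I α α) {x y : W} {α : L}
    {a : {g : G α // g ≠ 1}}
    (h : Reduced I G (x ++ (⟨α, a⟩ : Letter L G) :: y)) (hx : IndepWord I G α x) :
    ¬ HasHead I G α (x ++ y) := by
  rintro ⟨X, c, R, hw, hX⟩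
  rcases split_mid (A := x) hw with ⟨m, hm1, hm2⟩ | ⟨m, hm1, hm2⟩
  · exact hirr α (hx (⟨α, c⟩ : Letter L G) (by rw [hm1]; simp))
  · refine h ⟨α, a, c, x, m, R, by rw [hm2], ?_⟩
    intro d hd
    exact hX d (by rw [hm1]; simp [hd])

lemma hasHead_insert {x y : W} {α β : L} {a : {g : G α // g ≠ 1}}
    (hab : I α β) (h : HasHead I G β (x ++ y)) :
    HasHead I G β (x ++ (⟨α, a⟩ : Letter L G) :: y) := by
  obtain ⟨X, c, R, hw, hX⟩ := h
  rcases split_mid (A := x) hw with ⟨m, hm1, hm2⟩ | ⟨m, hm1, hm2⟩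
  · exact ⟨X, c, m ++ (⟨α, a⟩ : Letter L G) :: y, by rw [hm1]; simp, hX⟩
  · refine ⟨x ++ (⟨α, a⟩ : Letter L G) :: m, c, R, by rw [hm2]; simp, ?_⟩
    intro d hd
    rcases List.mem_append.mp hd with hd | hd
    · exact hX d (by rw [hm1]; simp [hd])
    · rcases List.mem_cons.mp hd with rfl | hd
      · exact hab
      · exact hX d (by rw [hm1]; simp [hd])

lemma head_transport (hsym : ∀ α β, I α β → I β α) {u u' : W}
    (hstep : TraceStep I G u u') {α : L} {x y : W} {a : {g : G α // g ≠ 1}}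
    (hu : u = x ++ (⟨α, a⟩ : Letter L G) :: y) (hx : IndepWord I G α x) :
    ∃ x' y', u' = x' ++ (⟨α, a⟩ : Letter L G) :: y' ∧ IndepWord I G α x' ∧
      TraceEquiv I G (x ++ y) (x' ++ y') ∧
      ∀ b : {g : G α // g ≠ 1},
        TraceEquiv I G (x ++ (⟨α, b⟩ : Letter L G) :: y)
          (x' ++ (⟨α, b⟩ : Letter L G) :: y') := by
  obtain ⟨s, t, p, q, hpq⟩ := hstep
  rcases two_decomp hu with ⟨m, h1, h2⟩ | ⟨h1, h2, h3⟩ | ⟨h1, h2, h3⟩ | ⟨m, h1, h2⟩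
  · refine ⟨s ++ q :: p :: m, y, by rw [h2]; simp, ?_, ?_, ?_⟩
    · intro d hd
      apply hx
      rw [h1]
      simp only [List.mem_append, List.mem_cons] at hd ⊢
      tauto
    · rw [h1]
      simpa using te_swap_pair hpq s (m ++ y)
    · intro b
      rw [h1]
      simpa using te_swap_pair hpq s (m ++ (⟨α, b⟩ : Letter L G) :: y)
  · refine ⟨s ++ [q], t, by rw [h2]; simp, ?_, ?_, ?_⟩
    · intro d hd
      rcases List.mem_append.mp hd with hd | hd
      · exact hx d (by rw [← h1]; exact hd)
      · have hdq : d = q := List.mem_singleton.mp hd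
        subst hdq
        refine hsym _ _ ?_
        rw [h2] at hpq
        exact hpq
    · rw [← h1, h3]
      simpa using te_refl (s ++ q :: t)
    · intro b
      rw [← h1, h3]
      have hb : I (⟨α, b⟩ : Letter L G).1 q.1 := by rw [h2] at hpq; exact hpq
      simpa using te_swap_pair hb s t
  · refine ⟨s, p :: y, by rw [h2, h3], ?_, ?_, ?_⟩
    · intro d hd
      exact hx d (by rw [h1]; simp [hd])
    · rw [h1]
      simpa using te_refl (s ++ p :: y)
    · intro b
      rw [h1]
      have hpa : I p.1 (⟨α, b⟩ : Letter L G).1 := hx p (by rw [h1]; simp)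
      simpa using te_swap_pair hpa s y
  · refine ⟨x, m ++ q :: p :: t, by rw [h1]; simp, hx, ?_, ?_⟩
    · rw [h2]
      simpa using te_swap_pair hpq (x ++ m) t
    · intro b
      rw [h2]
      simpa using te_swap_pair hpq (x ++ (⟨α, b⟩ : Letter L G) :: m) t

end Dev4
section Act
variable {L : Type} {I : L → L → Prop} {G : L → Type} [∀ α, Group (G α)]

local notation "W" => List (Letter L G)

variable (I G) in
open Classical in
/-- The action of `g ∈ G α` on words: merge with the leading `Γ_α` letter if
one exists, otherwise prepend. -/
noncomputable def act (α : L) (g : G α) (u : W) : W :=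
  if h : HasHead I G α u then
    if h1 : g * (Exists.choose (Exists.choose_spec h)).1 = 1 then
      Exists.choose h ++ Exists.choose (Exists.choose_spec (Exists.choose_spec h))
    else
      Exists.choose h ++
        (⟨α, ⟨g * (Exists.choose (Exists.choose_spec h)).1, h1⟩⟩ : Letter L G) ::
          Exists.choose (Exists.choose_spec (Exists.choose_spec h))
  else if h1 : g = 1 then u else (⟨α, ⟨g, h1⟩⟩ : Letter L G) :: u

lemma act_head_cancel (hirr : ∀ γ, ¬ I γ γ) {u x y : W} {α : L}
    {a : {g : G α // g ≠ 1}} (hd : u = x ++ (⟨α, a⟩ : Letter L G) :: y)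
    (hx : IndepWord I G α x) {g : G α} (hg : g * a.1 = 1) :
    act I G α g u = x ++ y := by
  have hh : HasHead I G α u := ⟨x, a, y, hd, hx⟩
  obtain ⟨e1, e2, e3⟩ := head_unique hirr
    ((Exists.choose_spec (Exists.choose_spec (Exists.choose_spec hh))).1.symm.trans hd)
    (Exists.choose_spec (Exists.choose_spec (Exists.choose_spec hh))).2 hx
  have hcond : g * (Exists.choose (Exists.choose_spec hh)).1 = 1 := by rw [e2]; exact hg
  rw [act, dif_pos hh, dif_pos hcond, e3, e1]

lemma act_head_ne (hirr : ∀ γ, ¬ I γ γ) {u x y : W} {α : L}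
    {a : {g : G α // g ≠ 1}} (hd : u = x ++ (⟨α, a⟩ : Letter L G) :: y)
    (hx : IndepWord I G α x) {g : G α} (hg : ¬ g * a.1 = 1) :
    act I G α g u = x ++ (⟨α, ⟨g * a.1, hg⟩⟩ : Letter L G) :: y := by
  have hh : HasHead I G α u := ⟨x, a, y, hd, hx⟩
  obtain ⟨e1, e2, e3⟩ := head_unique hirr
    ((Exists.choose_spec (Exists.choose_spec (Exists.choose_spec hh))).1.symm.trans hd)
    (Exists.choose_spec (Exists.choose_spec (Exists.choose_spec hh))).2 hx
  have hletter : ∀ (c d : {g : G α // g ≠ 1}) (_ : c = d) (p1 : ¬ g * c.1 = 1)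
      (p2 : ¬ g * d.1 = 1), (⟨α, ⟨g * c.1, p1⟩⟩ : Letter L G) = ⟨α, ⟨g * d.1, p2⟩⟩ := by
    rintro c d rfl p1 p2; rfl
  have hcond : ¬ g * (Exists.choose (Exists.choose_spec hh)).1 = 1 := by rw [e2]; exact hg
  rw [act, dif_pos hh, dif_neg hcond, hletter _ _ e2 _ hg, e3, e1]

lemma act_nohead_ne {u : W} {α : L} (hh : ¬ HasHead I G α u) {g : G α}
    (hg : ¬ g = 1) : act I G α g u = (⟨α, ⟨g, hg⟩⟩ : Letter L G) :: u := by
  rw [act, dif_neg hh, dif_neg hg]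

lemma act_one (hirr : ∀ γ, ¬ I γ γ) (α : L) (u : W) : act I G α 1 u = u := by
  by_cases hh : HasHead I G α u
  · obtain ⟨x, a, y, hd, hx⟩ := hh
    have hg : ¬ (1 : G α) * a.1 = 1 := by simpa using a.2
    rw [act_head_ne hirr hd hx hg, hd]
    have hval : (⟨(1 : G α) * a.1, hg⟩ : {g : G α // g ≠ 1}) = a := Subtype.ext (one_mul _)
    simp only [hval]
  · rw [act, dif_neg hh, dif_pos rfl]

lemma act_reduced (hirr : ∀ γ, ¬ I γ γ) (hsym : ∀ α β, I α β → I β α)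
    (α : L) (g : G α) {u : W} (hu : Reduced I G u) :
    Reduced I G (act I G α g u) := by
  by_cases hh : HasHead I G α u
  · obtain ⟨x, a, y, hd, hx⟩ := hh
    by_cases hg : g * a.1 = 1
    · rw [act_head_cancel hirr hd hx hg]
      exact reduced_delete hsym (hd ▸ hu) hx
    · rw [act_head_ne hirr hd hx hg]
      by_contra hb
      exact (bad_replace hb) (hd ▸ hu)
  · by_cases hg : g = 1
    · subst hg; rw [act_one hirr]; exact hu
    · rw [act_nohead_ne hh hg]
      exact reduced_cons_of hu hh

lemma act_mul (hirr : ∀ γ, ¬ I γ γ) (hsym : ∀ α β, I α β → I β α)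
    (α : L) (g h : G α) {u : W} (hu : Reduced I G u) :
    TraceEquiv I G (act I G α g (act I G α h u)) (act I G α (g * h) u) := by
  by_cases hh : HasHead I G α u
  · obtain ⟨x, a, y, hd, hx⟩ := hh
    by_cases h1 : h * a.1 = 1
    · rw [act_head_cancel hirr hd hx h1]
      have hnh : ¬ HasHead I G α (x ++ y) := nohead_cancel_self hirr (hd ▸ hu) hx
      by_cases hg : g = 1
      · subst hg
        rw [act_one hirr, act_head_cancel hirr hd hx (by rw [one_mul]; exact h1)]
        exact te_refl _
      · have hgh : ¬ (g * h) * a.1 = 1 := by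
          rw [mul_assoc, h1, mul_one]; exact hg
        rw [act_nohead_ne hnh hg, act_head_ne hirr hd hx hgh]
        have hval : (⟨α, ⟨(g * h) * a.1, hgh⟩⟩ : Letter L G) = ⟨α, ⟨g, hg⟩⟩ := by
          congr 1
          refine Subtype.ext ?_
          show (g * h) * a.1 = g
          rw [mul_assoc, h1, mul_one]
        simp only [hval]
        exact te_move hsym hx (⟨α, ⟨g, hg⟩⟩ : Letter L G) rfl y
    · rw [act_head_ne hirr hd hx h1]
      by_cases hg : g * (h * a.1) = 1
      · rw [act_head_cancel hirr rfl hx hg,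
          act_head_cancel hirr hd hx (by rw [mul_assoc]; exact hg)]
        exact te_refl _
      · have hgh : ¬ (g * h) * a.1 = 1 := by rw [mul_assoc]; exact hg
        rw [act_head_ne hirr rfl hx hg, act_head_ne hirr hd hx hgh]
        have hval : (⟨α, ⟨g * (h * a.1), hg⟩⟩ : Letter L G) = ⟨α, ⟨(g * h) * a.1, hgh⟩⟩ := by
          congr 1
          exact Subtype.ext (mul_assoc _ _ _).symm
        simp only [hval]
        exact te_refl _
  · by_cases h1 : h = 1
    · subst h1
      rw [act_one hirr, mul_one]
      exact te_refl _
    · rw [act_nohead_ne hh h1]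
      have hd0 : (⟨α, ⟨h, h1⟩⟩ : Letter L G) :: u =
          [] ++ (⟨α, ⟨h, h1⟩⟩ : Letter L G) :: u := rfl
      have hx0 : IndepWord I G α ([] : W) := by intro d hd; simp at hd
      by_cases hg : g * h = 1
      · rw [act_head_cancel hirr hd0 hx0 hg, act, dif_neg hh, dif_pos hg]
        exact te_refl _
      · rw [act_head_ne hirr hd0 hx0 hg, act_nohead_ne hh hg]
        exact te_refl _

end Act
section Act2
variable {L : Type} {I : L → L → Prop} {G : L → Type} [∀ α, Group (G α)]

local notation "W" => List (Letter L G)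

lemma te_of_eq {u v : W} (h : u = v) : TraceEquiv I G u v := h ▸ te_refl u

lemma act_comm_core (hirr : ∀ γ, ¬ I γ γ) {α β : L} (hab : I α β)
    {u x y₁ y₂ : W} {a : {g : G α // g ≠ 1}} {b : {g : G β // g ≠ 1}}
    (hd : u = x ++ (⟨α, a⟩ : Letter L G) :: (y₁ ++ (⟨β, b⟩ : Letter L G) :: y₂))
    (hx : IndepWord I G α x)
    (hx2 : IndepWord I G β (x ++ (⟨α, a⟩ : Letter L G) :: y₁))
    (g : G α) (h : G β) :
    act I G β h (act I G α g u) = act I G α g (act I G β h u) := by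
  have hxy1 : IndepWord I G β (x ++ y₁) := by
    intro d hd'; apply hx2 d
    rcases List.mem_append.mp hd' with h' | h' <;> simp [h']
  have hd2 : u = (x ++ (⟨α, a⟩ : Letter L G) :: y₁) ++ (⟨β, b⟩ : Letter L G) :: y₂ := by
    rw [hd]; simp
  by_cases hga : g * a.1 = 1 <;> by_cases hhb : h * b.1 = 1
  · rw [act_head_cancel hirr hd hx hga,
      act_head_cancel hirr (show x ++ (y₁ ++ (⟨β, b⟩ : Letter L G) :: y₂) =
        (x ++ y₁) ++ (⟨β, b⟩ : Letter L G) :: y₂ by simp) hxy1 hhb,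
      act_head_cancel hirr hd2 hx2 hhb,
      act_head_cancel hirr (show (x ++ (⟨α, a⟩ : Letter L G) :: y₁) ++ y₂ =
        x ++ (⟨α, a⟩ : Letter L G) :: (y₁ ++ y₂) by simp) hx hga]
    simp
  · rw [act_head_cancel hirr hd hx hga,
      act_head_ne hirr (show x ++ (y₁ ++ (⟨β, b⟩ : Letter L G) :: y₂) =
        (x ++ y₁) ++ (⟨β, b⟩ : Letter L G) :: y₂ by simp) hxy1 hhb,
      act_head_ne hirr hd2 hx2 hhb,
      act_head_cancel hirr (show (x ++ (⟨α, a⟩ : Letter L G) :: y₁) ++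
          (⟨β, ⟨h * b.1, hhb⟩⟩ : Letter L G) :: y₂ =
        x ++ (⟨α, a⟩ : Letter L G) :: (y₁ ++ (⟨β, ⟨h * b.1, hhb⟩⟩ : Letter L G) :: y₂)
        by simp) hx hga]
    simp
  · have hx2' : IndepWord I G β (x ++ (⟨α, ⟨g * a.1, hga⟩⟩ : Letter L G) :: y₁) := by
      intro d hd'
      rcases List.mem_append.mp hd' with h' | h'
      · exact hx2 d (by simp [h'])
      · rcases List.mem_cons.mp h' with rfl | h'
        · exact hab
        · exact hx2 d (by simp [h'])
    rw [act_head_ne hirr hd hx hga,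
      act_head_cancel hirr (show x ++ (⟨α, ⟨g * a.1, hga⟩⟩ : Letter L G) ::
          (y₁ ++ (⟨β, b⟩ : Letter L G) :: y₂) =
        (x ++ (⟨α, ⟨g * a.1, hga⟩⟩ : Letter L G) :: y₁) ++ (⟨β, b⟩ : Letter L G) :: y₂
        by simp) hx2' hhb,
      act_head_cancel hirr hd2 hx2 hhb,
      act_head_ne hirr (show (x ++ (⟨α, a⟩ : Letter L G) :: y₁) ++ y₂ =
        x ++ (⟨α, a⟩ : Letter L G) :: (y₁ ++ y₂) by simp) hx hga]
    simp
  · have hx2' : IndepWord I G β (x ++ (⟨α, ⟨g * a.1, hga⟩⟩ : Letter L G) :: y₁) := by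
      intro d hd'
      rcases List.mem_append.mp hd' with h' | h'
      · exact hx2 d (by simp [h'])
      · rcases List.mem_cons.mp h' with rfl | h'
        · exact hab
        · exact hx2 d (by simp [h'])
    rw [act_head_ne hirr hd hx hga,
      act_head_ne hirr (show x ++ (⟨α, ⟨g * a.1, hga⟩⟩ : Letter L G) ::
          (y₁ ++ (⟨β, b⟩ : Letter L G) :: y₂) =
        (x ++ (⟨α, ⟨g * a.1, hga⟩⟩ : Letter L G) :: y₁) ++ (⟨β, b⟩ : Letter L G) :: y₂
        by simp) hx2' hhb,
      act_head_ne hirr hd2 hx2 hhb,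
      act_head_ne hirr (show (x ++ (⟨α, a⟩ : Letter L G) :: y₁) ++
          (⟨β, ⟨h * b.1, hhb⟩⟩ : Letter L G) :: y₂ =
        x ++ (⟨α, a⟩ : Letter L G) :: (y₁ ++ (⟨β, ⟨h * b.1, hhb⟩⟩ : Letter L G) :: y₂)
        by simp) hx hga]
    simp

lemma act_comm (hirr : ∀ γ, ¬ I γ γ) (hsym : ∀ α β, I α β → I β α) {α β : L}
    (hab : I α β) (g : G α) (h : G β) (u : W) :
    TraceEquiv I G (act I G α g (act I G β h u)) (act I G β h (act I G α g u)) := by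
  have hne : α ≠ β := fun e => hirr β (e ▸ hab)
  by_cases hg1 : g = 1
  · subst hg1
    rw [act_one hirr, act_one hirr]
    exact te_refl _
  by_cases hh1 : h = 1
  · subst hh1
    rw [act_one hirr, act_one hirr]
    exact te_refl _
  by_cases hhα : HasHead I G α u <;> by_cases hhβ : HasHead I G β u
  · -- both heads
    obtain ⟨x, a, ya, hda, hxa⟩ := hhα
    obtain ⟨x', b, yb, hdb, hxb⟩ := hhβ
    rcases split_mid (A := x) (hda.symm.trans hdb) with ⟨m, hm1, hm2⟩ | ⟨m, hm1, hm2⟩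
    · -- β-head comes first
      have hd' : u = x' ++ (⟨β, b⟩ : Letter L G) :: (m ++ (⟨α, a⟩ : Letter L G) :: ya) := by
        rw [hdb, hm2]
      have hx2' : IndepWord I G α (x' ++ (⟨β, b⟩ : Letter L G) :: m) := hm1 ▸ hxa
      rw [act_comm_core hirr (hsym _ _ hab) hd' hxb hx2' h g]
      exact te_refl _
    · cases m with
      | nil =>
        exfalso
        rw [List.nil_append] at hm2
        injection hm2 with e1 e2
        injection e1 with f1 f2
        exact hne f1
      | cons d m' =>
        rw [List.cons_append] at hm2
        injection hm2 with e1 e2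
        have hd' : u = x ++ (⟨α, a⟩ : Letter L G) :: (m' ++ (⟨β, b⟩ : Letter L G) :: yb) := by
          rw [hda, e2]
        have hx2' : IndepWord I G β (x ++ (⟨α, a⟩ : Letter L G) :: m') := by
          rw [← e1] at hm1
          exact hm1 ▸ hxb
        rw [act_comm_core hirr hab hd' hxa hx2' g h]
        exact te_refl _
  · -- α-head only
    obtain ⟨x, a, y, hd, hx⟩ := hhα
    have hcons : IndepWord I G α ((⟨β, ⟨h, hh1⟩⟩ : Letter L G) :: x) := by
      intro d hd'
      rcases List.mem_cons.mp hd' with rfl | hd'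
      · exact hsym _ _ hab
      · exact hx d hd'
    have hdcons : (⟨β, ⟨h, hh1⟩⟩ : Letter L G) :: u =
        ((⟨β, ⟨h, hh1⟩⟩ : Letter L G) :: x) ++ (⟨α, a⟩ : Letter L G) :: y := by
      rw [hd]; rfl
    rw [act_nohead_ne hhβ hh1]
    by_cases hga : g * a.1 = 1
    · rw [act_head_cancel hirr hdcons hcons hga, act_head_cancel hirr hd hx hga]
      have hnw1 : ¬ HasHead I G β (x ++ y) := fun hc =>
        hhβ (hd ▸ hasHead_insert hab hc)
      rw [act_nohead_ne hnw1 hh1]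
      exact te_of_eq (by simp)
    · rw [act_head_ne hirr hdcons hcons hga, act_head_ne hirr hd hx hga]
      have hnw1 : ¬ HasHead I G β (x ++ (⟨α, ⟨g * a.1, hga⟩⟩ : Letter L G) :: y) :=
        fun hc => hhβ (hd ▸ hasHead_replace hc)
      rw [act_nohead_ne hnw1 hh1]
      exact te_of_eq (by simp)
  · -- β-head only
    obtain ⟨x, b, y, hd, hx⟩ := hhβ
    have hcons : IndepWord I G β ((⟨α, ⟨g, hg1⟩⟩ : Letter L G) :: x) := by
      intro d hd'
      rcases List.mem_cons.mp hd' with rfl | hd'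
      · exact hab
      · exact hx d hd'
    have hdcons : (⟨α, ⟨g, hg1⟩⟩ : Letter L G) :: u =
        ((⟨α, ⟨g, hg1⟩⟩ : Letter L G) :: x) ++ (⟨β, b⟩ : Letter L G) :: y := by
      rw [hd]; rfl
    rw [act_nohead_ne hhα hg1]
    by_cases hhb : h * b.1 = 1
    · rw [act_head_cancel hirr hdcons hcons hhb, act_head_cancel hirr hd hx hhb]
      have hnw1 : ¬ HasHead I G α (x ++ y) := fun hc =>
        hhα (hd ▸ hasHead_insert (hsym _ _ hab) hc)
      rw [act_nohead_ne hnw1 hg1]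
      exact te_of_eq (by simp)
    · rw [act_head_ne hirr hdcons hcons hhb, act_head_ne hirr hd hx hhb]
      have hnw1 : ¬ HasHead I G α (x ++ (⟨β, ⟨h * b.1, hhb⟩⟩ : Letter L G) :: y) :=
        fun hc => hhα (hd ▸ hasHead_replace hc)
      rw [act_nohead_ne hnw1 hg1]
      exact te_of_eq (by simp)
  · -- no heads
    have hnα : ¬ HasHead I G α ((⟨β, ⟨h, hh1⟩⟩ : Letter L G) :: u) := by
      intro hc
      rcases hasHead_cons_cases hc with ⟨c, hcc⟩ | ⟨-, hc'⟩
      · injection hcc with f1 f2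
        exact hne f1.symm
      · exact hhα hc'
    have hnβ : ¬ HasHead I G β ((⟨α, ⟨g, hg1⟩⟩ : Letter L G) :: u) := by
      intro hc
      rcases hasHead_cons_cases hc with ⟨c, hcc⟩ | ⟨-, hc'⟩
      · injection hcc with f1 f2
        exact hne f1
      · exact hhβ hc'
    rw [act_nohead_ne hhβ hh1, act_nohead_ne hhα hg1,
      act_nohead_ne hnα hg1, act_nohead_ne hnβ hh1]
    have : I (⟨α, ⟨g, hg1⟩⟩ : Letter L G).1 (⟨β, ⟨h, hh1⟩⟩ : Letter L G).1 := hab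
    simpa using te_swap_pair this ([] : W) u

lemma act_step (hirr : ∀ γ, ¬ I γ γ) (hsym : ∀ α β, I α β → I β α)
    {u u' : W} (hstep : TraceStep I G u u') (α : L) (g : G α) :
    TraceEquiv I G (act I G α g u) (act I G α g u') := by
  by_cases hh : HasHead I G α u
  · obtain ⟨x, a, y, hd, hx⟩ := hh
    obtain ⟨x', y', hd', hx', hte, hte2⟩ := head_transport hsym hstep hd hx
    by_cases hg : g * a.1 = 1
    · rw [act_head_cancel hirr hd hx hg, act_head_cancel hirr hd' hx' hg]
      exact hte
    · rw [act_head_ne hirr hd hx hg, act_head_ne hirr hd' hx' hg]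
      exact hte2 _
  · have hh' : ¬ HasHead I G α u' := by
      intro hc
      obtain ⟨x', a', y', hd', hx'⟩ := hc
      obtain ⟨x, y, hd2, hx2, -, -⟩ :=
        head_transport hsym (traceStep_symm hsym hstep) hd' hx'
      exact hh ⟨x, a', y, hd2, hx2⟩
    by_cases hg : g = 1
    · subst hg
      rw [act_one hirr, act_one hirr]
      exact te_rel hstep
    · rw [act_nohead_ne hh hg, act_nohead_ne hh' hg]
      simpa using te_app_left [(⟨α, ⟨g, hg⟩⟩ : Letter L G)] (te_rel hstep)

lemma act_te (hirr : ∀ γ, ¬ I γ γ) (hsym : ∀ α β, I α β → I β α)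
    {u v : W} (h : TraceEquiv I G u v) (α : L) (g : G α) :
    TraceEquiv I G (act I G α g u) (act I G α g v) := by
  induction h with
  | rel u v h => exact act_step hirr hsym h α g
  | refl u => exact te_refl _
  | symm u v _ ih => exact te_symm ih
  | trans u v w _ _ ih1 ih2 => exact te_trans ih1 ih2

end Act2
section QuotPart
variable {L : Type} {I : L → L → Prop} {G : L → Type} [∀ α, Group (G α)]

local notation "W" => List (Letter L G)

lemma nil_reduced : Reduced I G ([] : W) := by
  rintro ⟨β, b, b', x, u, y, hw, -⟩
  cases x <;> simp at hw

variable (I G) in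
def rsetoid : Setoid {w : W // Reduced I G w} where
  r u v := TraceEquiv I G u.1 v.1
  iseqv := ⟨fun u => te_refl _, fun h => te_symm h, fun h1 h2 => te_trans h1 h2⟩

variable (I G) in
def QW := Quotient (rsetoid I G)

noncomputable def actQ (hirr : ∀ γ, ¬ I γ γ) (hsym : ∀ α β, I α β → I β α)
    (α : L) (g : G α) : QW I G → QW I G :=
  Quotient.map (fun u => ⟨act I G α g u.1, act_reduced hirr hsym α g u.2⟩)
    (fun _ _ h => act_te hirr hsym h α g)

lemma actQ_one (hirr : ∀ γ, ¬ I γ γ) (hsym : ∀ α β, I α β → I β α)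
    (α : L) (X : QW I G) : actQ hirr hsym α (1 : G α) X = X := by
  induction X using Quotient.inductionOn with
  | h u => exact congrArg (Quotient.mk _) (Subtype.ext (act_one hirr α u.1))

lemma actQ_mul (hirr : ∀ γ, ¬ I γ γ) (hsym : ∀ α β, I α β → I β α)
    (α : L) (g h : G α) (X : QW I G) :
    actQ hirr hsym α g (actQ hirr hsym α h X) = actQ hirr hsym α (g * h) X := by
  induction X using Quotient.inductionOn with
  | h u => exact Quotient.sound (act_mul hirr hsym α g h u.2)

lemma actQ_comm (hirr : ∀ γ, ¬ I γ γ) (hsym : ∀ α β, I α β → I β α)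
    {α β : L} (hab : I α β) (g : G α) (h : G β) (X : QW I G) :
    actQ hirr hsym α g (actQ hirr hsym β h X) =
      actQ hirr hsym β h (actQ hirr hsym α g X) := by
  induction X using Quotient.inductionOn with
  | h u => exact Quotient.sound (act_comm hirr hsym hab g h u.1)

noncomputable def toPerm (hirr : ∀ γ, ¬ I γ γ) (hsym : ∀ α β, I α β → I β α)
    (α : L) : G α →* Equiv.Perm (QW I G) :=
  MonoidHom.mk' (fun g =>
    { toFun := actQ hirr hsym α g
      invFun := actQ hirr hsym α g⁻¹
      left_inv := fun X => by
        rw [actQ_mul, inv_mul_cancel, actQ_one]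
      right_inv := fun X => by
        rw [actQ_mul, mul_inv_cancel, actQ_one] })
    (fun g h => Equiv.ext fun X => (actQ_mul hirr hsym α g h X).symm)

noncomputable def bigHom (hirr : ∀ γ, ¬ I γ γ) (hsym : ∀ α β, I α β → I β α) :
    Monoid.CoprodI G →* Equiv.Perm (QW I G) :=
  Monoid.CoprodI.lift (fun α => toPerm hirr hsym α)

lemma bigHom_rels (hirr : ∀ γ, ¬ I γ γ) (hsym : ∀ α β, I α β → I β α) :
    ∀ x ∈ gpRels I G, bigHom hirr hsym x = 1 := by
  rintro x ⟨α, β, g, h, hab, rfl⟩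
  simp only [map_mul, map_inv, bigHom, Monoid.CoprodI.lift_of]
  rw [mul_inv_eq_one, mul_inv_eq_iff_eq_mul]
  exact Equiv.ext fun X => actQ_comm hirr hsym hab g h X

noncomputable def permHom (hirr : ∀ γ, ¬ I γ γ) (hsym : ∀ α β, I α β → I β α) :
    GP I G →* Equiv.Perm (QW I G) :=
  QuotientGroup.lift _ (bigHom hirr hsym)
    (fun x hx => (Subgroup.normalClosure_le_normal
      (fun y hy => MonoidHom.mem_ker.mpr (bigHom_rels hirr hsym y hy)) hx))

lemma permHom_gpOf (hirr : ∀ γ, ¬ I γ γ) (hsym : ∀ α β, I α β → I β α)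
    (α : L) (g : G α) :
    permHom hirr hsym (gpOf I G α g) = toPerm hirr hsym α g := by
  have h1 : permHom hirr hsym (gpOf I G α g) =
      bigHom hirr hsym (Monoid.CoprodI.of g) := rfl
  rw [h1, bigHom, Monoid.CoprodI.lift_of]

lemma perm_apply_nil (hirr : ∀ γ, ¬ I γ γ) (hsym : ∀ α β, I α β → I β α) :
    ∀ (w : W) (hw : Reduced I G w),
    permHom hirr hsym (evalWord I G w) (Quotient.mk _ ⟨[], nil_reduced⟩) =
      Quotient.mk _ ⟨w, hw⟩ := by
  intro w
  induction w with
  | nil =>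
    intro hw
    rw [evalWord_nil, map_one]
    rfl
  | cons l t ih =>
    intro hw
    rw [evalWord_cons, map_mul]
    change (permHom hirr hsym (gpOf I G l.1 l.2.1)) ((permHom hirr hsym (evalWord I G t)) (Quotient.mk (rsetoid I G) ⟨[], nil_reduced⟩)) = _
    rw [ih (reduced_tail hw), permHom_gpOf]
    show actQ hirr hsym l.1 l.2.1 (Quotient.mk _ ⟨t, _⟩) = _
    refine congrArg (Quotient.mk _) (Subtype.ext ?_)
    show act I G l.1 l.2.1 t = l :: t
    rw [act_nohead_ne (reduced_cons_nohead hw) l.2.2]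

end QuotPart
section Final
variable {L : Type} {I : L → L → Prop} {G : L → Type} [∀ α, Group (G α)]

local notation "W" => List (Letter L G)

lemma one_step (hsym : ∀ α β, I α β → I β α) {w x u y : W} {β : L}
    {b c : {g : G β // g ≠ 1}}
    (hwd : w = x ++ (⟨β, b⟩ : Letter L G) :: (u ++ (⟨β, c⟩ : Letter L G) :: y))
    (hu : IndepWord I G β u) :
    ∃ w1 : W, evalWord I G w1 = evalWord I G w ∧ w1.length + 1 ≤ w.length ∧
      (∀ α, countAlpha G α w1 ≤ countAlpha G α w) ∧
      countAlpha G β w1 < countAlpha G β w := by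
  have heval : evalWord I G w = evalWord I G x *
      (evalWord I G u * (gpOf I G β (b.1 * c.1) * evalWord I G y)) := by
    rw [hwd]
    simp only [evalWord_append, evalWord_cons]
    rw [map_mul, ← mul_assoc (gpOf I G β b.1) (evalWord I G u),
      evalWord_comm_indep hsym hu b.1,
      mul_assoc (evalWord I G u) (gpOf I G β b.1), ← mul_assoc (gpOf I G β b.1)]
  by_cases hbc : b.1 * c.1 = 1
  · refine ⟨x ++ (u ++ y), ?_, ?_, ?_, ?_⟩
    · rw [heval, hbc, map_one, one_mul, evalWord_append, evalWord_append]
    · rw [hwd]; simp [List.length_append]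
    · intro α
      rw [hwd]
      simp only [countAlpha_append]
      by_cases hba : β = α
      · rw [countAlpha_cons_eq (l := (⟨β, b⟩ : Letter L G)) hba, countAlpha_append,
          countAlpha_cons_eq (l := (⟨β, c⟩ : Letter L G)) hba]
        omega
      · rw [countAlpha_cons_ne (l := (⟨β, b⟩ : Letter L G)) hba, countAlpha_append,
          countAlpha_cons_ne (l := (⟨β, c⟩ : Letter L G)) hba]
    · rw [hwd]
      simp only [countAlpha_append]
      rw [countAlpha_cons_eq (l := (⟨β, b⟩ : Letter L G))
          (show (⟨β, b⟩ : Letter L G).1 = β from rfl), countAlpha_append,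
        countAlpha_cons_eq (l := (⟨β, c⟩ : Letter L G))
          (show (⟨β, c⟩ : Letter L G).1 = β from rfl)]
      omega
  · refine ⟨x ++ (u ++ (⟨β, ⟨b.1 * c.1, hbc⟩⟩ : Letter L G) :: y), ?_, ?_, ?_, ?_⟩
    · rw [heval]
      simp only [evalWord_append, evalWord_cons]
    · rw [hwd]; simp [List.length_append]
    · intro α
      rw [hwd]
      simp only [countAlpha_append]
      by_cases hba : β = α
      · rw [countAlpha_cons_eq (l := (⟨β, b⟩ : Letter L G)) hba, countAlpha_append,
          countAlpha_cons_eq (l := (⟨β, c⟩ : Letter L G)) hba,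
          countAlpha_cons_eq (l := (⟨β, ⟨b.1 * c.1, hbc⟩⟩ : Letter L G)) hba]
        omega
      · rw [countAlpha_cons_ne (l := (⟨β, b⟩ : Letter L G)) hba, countAlpha_append,
          countAlpha_cons_ne (l := (⟨β, c⟩ : Letter L G)) hba,
          countAlpha_cons_ne (l := (⟨β, ⟨b.1 * c.1, hbc⟩⟩ : Letter L G)) hba]
    · rw [hwd]
      simp only [countAlpha_append]
      rw [countAlpha_cons_eq (l := (⟨β, b⟩ : Letter L G))
          (show (⟨β, b⟩ : Letter L G).1 = β from rfl), countAlpha_append,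
        countAlpha_cons_eq (l := (⟨β, c⟩ : Letter L G))
          (show (⟨β, c⟩ : Letter L G).1 = β from rfl),
        countAlpha_cons_eq (l := (⟨β, ⟨b.1 * c.1, hbc⟩⟩ : Letter L G))
          (show (⟨β, ⟨b.1 * c.1, hbc⟩⟩ : Letter L G).1 = β from rfl)]
      omega

lemma exists_reduced (hsym : ∀ α β, I α β → I β α) :
    ∀ (n : ℕ) (w : W), w.length ≤ n →
    ∃ v : W, Reduced I G v ∧ evalWord I G v = evalWord I G w ∧
      ∀ α, countAlpha G α v ≤ countAlpha G α w := by
  intro n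
  induction n with
  | zero =>
    intro w hw
    have hwnil : w = [] := List.eq_nil_of_length_eq_zero (Nat.le_zero.mp hw)
    subst hwnil
    exact ⟨[], nil_reduced, rfl, fun α => le_rfl⟩
  | succ n ih =>
    intro w hw
    by_cases hr : Reduced I G w
    · exact ⟨w, hr, rfl, fun α => le_rfl⟩
    · obtain ⟨β, b, c, x, u, y, hwd, hu⟩ := not_not.mp hr
      obtain ⟨w1, he, hlen, hcnt, -⟩ := one_step hsym hwd hu
      obtain ⟨v, hv1, hv2, hv3⟩ := ih w1 (by omega)
      exact ⟨v, hv1, hv2.trans he, fun α => (hv3 α).trans (hcnt α)⟩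

end Final

theorem reduced_iff_forall_alphaReduced
    {L : Type} [Finite L] (I : L → L → Prop) (G : L → Type) [∀ α, Group (G α)]
    (hirr : ∀ α, ¬ I α α) (hsym : ∀ α β, I α β → I β α)
    (w : List (Letter L G)) :
    Reduced I G w ↔ ∀ α : L, AlphaReduced I G α w := by
  constructor
  · intro hred α w' hcount heval
    obtain ⟨v, hv1, hv2, hv3⟩ := exists_reduced hsym w'.length w' le_rfl
    have h1 := perm_apply_nil hirr hsym w hred
    have h2 := perm_apply_nil hirr hsym v hv1
    rw [hv2, heval] at h2
    have hq : (Quotient.mk _ (⟨v, hv1⟩ : {w : List (Letter L G) // Reduced I G w}) :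
        QW I G) = Quotient.mk _ ⟨w, hred⟩ := h2.symm.trans h1
    have hte : TraceEquiv I G v w := Quotient.exact hq
    have hcnt := countAlpha_eq_of_te α hte
    have := hv3 α
    omega
  · intro hall
    by_contra hred
    obtain ⟨β, b, c, x, u, y, hwd, hu⟩ := not_not.mp hred
    obtain ⟨w1, he, -, -, hlt⟩ := one_step hsym hwd hu
    exact hall β w1 hlt he
end

section
/- Let u ∈ Γ* be reduced, and let S = {v ∈ Γ* : u ≡ p v p̄ for some p ∈ Γ*}. Then S is nonempty, any element ũ ∈ S of minimal length admits no factorization ũ ≡ a w ā with a ∈ Γ and w ∈ Γ*, and any two elements of S of minimal length are trace equivalent (so the minimal ũ with u ≡ p ũ p̄ is unique up to ≡). -/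
variable {L : Type} (I : L → L → Prop) (G : L → Type) [∀ α, Group (G α)]

section Aux

variable {I G}

lemma te_refl_s6 (x : List (Letter L G)) : TraceEquiv I G x x := Relation.EqvGen.refl x
lemma te_symm_s6 {x y} (h : TraceEquiv I G x y) : TraceEquiv I G y x := Relation.EqvGen.symm _ _ h
lemma te_trans_s6 {x y z} (h : TraceEquiv I G x y) (h' : TraceEquiv I G y z) :
    TraceEquiv I G x z := Relation.EqvGen.trans _ _ _ h h'

lemma te_sandwich (l r : List (Letter L G)) {x y} (h : TraceEquiv I G x y) :
    TraceEquiv I G (l ++ x ++ r) (l ++ y ++ r) := by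
  induction h with
  | rel x y hs =>
    refine Relation.EqvGen.rel _ _ ?_
    cases hs with
    | swap u v a b hab =>
      have := TraceStep.swap (I := I) (G := G) (l ++ u) (v ++ r) a b hab
      simpa [List.append_assoc] using this
  | refl x => exact te_refl_s6 _
  | symm x y _ ih => exact te_symm_s6 ih
  | trans x y z _ _ ih1 ih2 => exact te_trans_s6 ih1 ih2

lemma te_cons_congr (c : Letter L G) {x y} (h : TraceEquiv I G x y) :
    TraceEquiv I G (c :: x) (c :: y) := by
  simpa using te_sandwich [c] [] h

lemma te_append_right (r : List (Letter L G)) {x y} (h : TraceEquiv I G x y) :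
    TraceEquiv I G (x ++ r) (y ++ r) := by
  simpa using te_sandwich [] r h

lemma te_append_left (l : List (Letter L G)) {x y} (h : TraceEquiv I G x y) :
    TraceEquiv I G (l ++ x) (l ++ y) := by
  simpa using te_sandwich l [] h

lemma te_length {x y} (h : TraceEquiv I G x y) : x.length = y.length := by
  induction h with
  | rel x y hs => cases hs; simp
  | refl x => rfl
  | symm _ _ _ ih => omega
  | trans _ _ _ _ _ ih1 ih2 => omega

lemma te_swap_head {a b : Letter L G} (h : I a.1 b.1) (t : List (Letter L G)) :
    TraceEquiv I G (a :: b :: t) (b :: a :: t) := by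
  have := Relation.EqvGen.rel _ _ (TraceStep.swap (I := I) (G := G) [] t a b h)
  simpa [TraceEquiv] using this

lemma te_reverse (hsym : ∀ α β, I α β → I β α) {x y} (h : TraceEquiv I G x y) :
    TraceEquiv I G x.reverse y.reverse := by
  induction h with
  | rel x y hs =>
    cases hs with
    | swap u v a b hab =>
      have := Relation.EqvGen.rel _ _
        (TraceStep.swap (I := I) (G := G) v.reverse u.reverse b a (hsym _ _ hab))
      simpa [TraceEquiv, List.reverse_append, List.append_assoc] using this
  | refl x => exact te_refl_s6 _
  | symm _ _ _ ih => exact te_symm_s6 ih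
  | trans _ _ _ _ _ ih1 ih2 => exact te_trans_s6 ih1 ih2

open Classical in
noncomputable def proj2 (γ δ : L) : List (Letter L G) → List (Letter L G)
  | [] => []
  | l :: w => if l.1 = γ ∨ l.1 = δ then l :: proj2 γ δ w else proj2 γ δ w

lemma proj2_nil (γ δ : L) : proj2 (G := G) γ δ [] = [] := rfl

lemma proj2_cons_pos {γ δ : L} {l : Letter L G} (h : l.1 = γ ∨ l.1 = δ) (w) :
    proj2 γ δ (l :: w) = l :: proj2 γ δ w := by
  simp [proj2, h]

lemma proj2_cons_neg {γ δ : L} {l : Letter L G} (h : ¬ (l.1 = γ ∨ l.1 = δ)) (w) :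
    proj2 γ δ (l :: w) = proj2 γ δ w := by
  simp [proj2, h]

lemma proj2_append (γ δ : L) (x y : List (Letter L G)) :
    proj2 γ δ (x ++ y) = proj2 γ δ x ++ proj2 γ δ y := by
  induction x with
  | nil => simp [proj2]
  | cons l w ih =>
    by_cases h : l.1 = γ ∨ l.1 = δ
    · simp [proj2_cons_pos h, ih]
    · simp [proj2_cons_neg h, ih]

lemma mem_proj2 {γ δ : L} {c : Letter L G} {w} (hc : c ∈ w) (h : c.1 = γ ∨ c.1 = δ) :
    c ∈ proj2 γ δ w := by
  induction w with
  | nil => cases hc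
  | cons l w ih =>
    rcases List.mem_cons.mp hc with rfl | hc'
    · rw [proj2_cons_pos h]; exact List.mem_cons_self
    · by_cases hl : l.1 = γ ∨ l.1 = δ
      · rw [proj2_cons_pos hl]; exact List.mem_cons_of_mem _ (ih hc')
      · rw [proj2_cons_neg hl]; exact ih hc'

lemma mem_of_mem_proj2 {γ δ : L} {c : Letter L G} {w} (hc : c ∈ proj2 γ δ w) : c ∈ w := by
  induction w with
  | nil => simpa [proj2] using hc
  | cons l w ih =>
    by_cases hl : l.1 = γ ∨ l.1 = δ
    · rw [proj2_cons_pos hl] at hc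
      rcases List.mem_cons.mp hc with rfl | hc'
      · exact List.mem_cons_self
      · exact List.mem_cons_of_mem _ (ih hc')
    · rw [proj2_cons_neg hl] at hc
      exact List.mem_cons_of_mem _ (ih hc)

lemma proj2_reverse (γ δ : L) (w : List (Letter L G)) :
    proj2 γ δ w.reverse = (proj2 γ δ w).reverse := by
  induction w with
  | nil => simp [proj2]
  | cons l w ih =>
    by_cases hl : l.1 = γ ∨ l.1 = δ
    · simp [proj2_cons_pos hl, List.reverse_cons, proj2_append, ih, proj2_cons_pos hl,
        proj2_nil]
    · simp [proj2_cons_neg hl, List.reverse_cons, proj2_append, ih, proj2_cons_neg hl,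
        proj2_nil]

lemma not_both (hirr : ∀ α, ¬ I α α) (hsym : ∀ α β, I α β → I β α) {α β γ δ : L} (hok : γ = δ ∨ ¬ I γ δ) (hI : I α β) :
    ¬ ((α = γ ∨ α = δ) ∧ (β = γ ∨ β = δ)) := by
  rintro ⟨(rfl | rfl), (rfl | rfl)⟩
  · exact hirr _ hI
  · rcases hok with rfl | h
    · exact hirr _ hI
    · exact h hI
  · rcases hok with rfl | h
    · exact hirr _ hI
    · exact h (hsym _ _ hI)
  · exact hirr _ hI

lemma proj2_te (hirr : ∀ α, ¬ I α α) (hsym : ∀ α β, I α β → I β α) {γ δ : L} (hok : γ = δ ∨ ¬ I γ δ) {x y} (h : TraceEquiv I G x y) :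
    proj2 γ δ x = proj2 γ δ y := by
  induction h with
  | rel x y hs =>
    cases hs with
    | swap u v a b hab =>
      have hnb := not_both hirr hsym hok hab
      rw [proj2_append, proj2_append]
      congr 1
      by_cases ha : a.1 = γ ∨ a.1 = δ
      · have hb : ¬ (b.1 = γ ∨ b.1 = δ) := fun hb => hnb ⟨ha, hb⟩
        rw [proj2_cons_pos ha, proj2_cons_neg hb, proj2_cons_neg hb, proj2_cons_pos ha]
      · by_cases hb : b.1 = γ ∨ b.1 = δ
        · rw [proj2_cons_neg ha, proj2_cons_pos hb, proj2_cons_pos hb, proj2_cons_neg ha]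
        · rw [proj2_cons_neg ha, proj2_cons_neg hb, proj2_cons_neg hb, proj2_cons_neg ha]
  | refl x => rfl
  | symm _ _ _ ih => exact ih.symm
  | trans _ _ _ _ _ ih1 ih2 => exact ih1.trans ih2

lemma te_pull_front {b : Letter L G} {y₁ y₂ : List (Letter L G)}
    (h : ∀ c ∈ y₁, I c.1 b.1) :
    TraceEquiv I G (y₁ ++ b :: y₂) (b :: (y₁ ++ y₂)) := by
  induction y₁ with
  | nil => exact te_refl_s6 _
  | cons c y₁ ih =>
    have h1 : TraceEquiv I G (c :: (y₁ ++ b :: y₂)) (c :: b :: (y₁ ++ y₂)) :=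
      te_cons_congr c (ih fun d hd => h d (List.mem_cons_of_mem _ hd))
    exact te_trans_s6 h1 (te_swap_head (h c (List.mem_cons_self)) _)

lemma first_beta {β : L} {b : Letter L G} {x t} (h : proj2 β β x = b :: t) :
    ∃ y₁ y₂, x = y₁ ++ b :: y₂ ∧ ∀ c ∈ y₁, c.1 ≠ β := by
  induction x generalizing t with
  | nil => simp [proj2] at h
  | cons l w ih =>
    by_cases hl : l.1 = β ∨ l.1 = β
    · rw [proj2_cons_pos hl] at h
      injection h with h1 h2
      subst h1
      exact ⟨[], w, rfl, by simp⟩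
    · rw [proj2_cons_neg hl] at h
      obtain ⟨y₁, y₂, rfl, hy⟩ := ih h
      refine ⟨l :: y₁, y₂, rfl, ?_⟩
      intro c hc
      rcases List.mem_cons.mp hc with rfl | hc'
      · simpa using hl
      · exact hy c hc'


lemma extract_front (hirr : ∀ α, ¬ I α α) (hsym : ∀ α β, I α β → I β α)
    (b : Letter L G) (x : List (Letter L G))
    (h : ∀ δ, δ = b.1 ∨ ¬ I b.1 δ → ∃ t, proj2 b.1 δ x = b :: t) :
    ∃ z, TraceEquiv I G x (b :: z) := by
  obtain ⟨t, ht⟩ := h b.1 (Or.inl rfl)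
  obtain ⟨y₁, y₂, rfl, hy₁⟩ := first_beta ht
  have hind : ∀ c ∈ y₁, I c.1 b.1 := by
    intro c hc
    by_contra hnc
    obtain ⟨t', ht'⟩ := h c.1 (Or.inr fun hI => hnc (hsym _ _ hI))
    have hc' : c ∈ proj2 b.1 c.1 y₁ := mem_proj2 hc (Or.inr rfl)
    rw [proj2_append] at ht'
    cases hp : proj2 b.1 c.1 y₁ with
    | nil => rw [hp] at hc'; cases hc'
    | cons d r =>
      rw [hp] at ht'
      have hd : d = b := by
        have := congrArg List.head? ht'
        simpa using this
      have hdm : d ∈ y₁ := mem_of_mem_proj2 (hp ▸ (show d ∈ d :: r from List.mem_cons_self))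
      exact hy₁ d hdm (by rw [hd])
  exact ⟨y₁ ++ y₂, te_pull_front hind⟩

lemma extract_back (hirr : ∀ α, ¬ I α α) (hsym : ∀ α β, I α β → I β α)
    (e : Letter L G) (x : List (Letter L G))
    (h : ∀ δ, δ = e.1 ∨ ¬ I e.1 δ → ∃ t, proj2 e.1 δ x = t ++ [e]) :
    ∃ m, TraceEquiv I G x (m ++ [e]) := by
  have h' : ∀ δ, δ = e.1 ∨ ¬ I e.1 δ → ∃ t, proj2 e.1 δ x.reverse = e :: t := by
    intro δ hδ
    obtain ⟨t, ht⟩ := h δ hδ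
    exact ⟨t.reverse, by rw [proj2_reverse, ht]; simp⟩
  obtain ⟨z, hz⟩ := extract_front hirr hsym e x.reverse h'
  refine ⟨z.reverse, ?_⟩
  have := te_reverse hsym hz
  simpa using this

lemma proj_eq_te (hirr : ∀ α, ¬ I α α) (hsym : ∀ α β, I α β → I β α)
    {x y : List (Letter L G)}
    (h : ∀ γ δ, γ = δ ∨ ¬ I γ δ → proj2 γ δ x = proj2 γ δ y) :
    TraceEquiv I G x y := by
  induction x generalizing y with
  | nil =>
    cases y with
    | nil => exact te_refl_s6 _
    | cons c y' =>
      have := h c.1 c.1 (Or.inl rfl)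
      rw [proj2_nil, proj2_cons_pos (Or.inl rfl)] at this
      cases this
  | cons c x' ih =>
    obtain ⟨z, hz⟩ := extract_front hirr hsym c y (by
      intro δ hδ
      refine ⟨proj2 c.1 δ x', ?_⟩
      rw [← h c.1 δ (hδ.imp Eq.symm id), proj2_cons_pos (Or.inl rfl)])
    have hx'z : TraceEquiv I G x' z := by
      apply ih
      intro γ δ hok
      have h1 := h γ δ hok
      have h2 := proj2_te hirr hsym hok hz
      rw [h2] at h1
      by_cases hc : c.1 = γ ∨ c.1 = δ
      · rw [proj2_cons_pos hc, proj2_cons_pos hc] at h1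
        injection h1
      · rwa [proj2_cons_neg hc, proj2_cons_neg hc] at h1
    exact te_trans_s6 (te_cons_congr c hx'z) (te_symm_s6 hz)

lemma te_cancel_left (hirr : ∀ α, ¬ I α α) (hsym : ∀ α β, I α β → I β α)
    {c : Letter L G} {x y} (h : TraceEquiv I G (c :: x) (c :: y)) :
    TraceEquiv I G x y := by
  apply proj_eq_te hirr hsym
  intro γ δ hok
  have h1 := proj2_te hirr hsym hok h
  by_cases hc : c.1 = γ ∨ c.1 = δ
  · rw [proj2_cons_pos hc, proj2_cons_pos hc] at h1
    injection h1
  · rwa [proj2_cons_neg hc, proj2_cons_neg hc] at h1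

lemma te_cancel_right (hirr : ∀ α, ¬ I α α) (hsym : ∀ α β, I α β → I β α)
    {c : Letter L G} {x y} (h : TraceEquiv I G (x ++ [c]) (y ++ [c])) :
    TraceEquiv I G x y := by
  have h1 := te_reverse hsym h
  rw [List.reverse_append, List.reverse_append] at h1
  simp only [List.reverse_singleton, List.singleton_append] at h1
  have h2 := te_cancel_left hirr hsym h1
  have h3 := te_reverse hsym h2
  simpa using h3


lemma half (hirr : ∀ α, ¬ I α α) (hsym : ∀ α β, I α β → I β α)
    {a b : Letter L G} {w v : List (Letter L G)}
    (hne : a.1 ≠ b.1) (hI : I a.1 b.1)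
    (h3 : TraceEquiv I G (a :: (w ++ [letterInv G a])) (b :: (v ++ [letterInv G b]))) :
    ∃ m, TraceEquiv I G w (b :: (m ++ [letterInv G b])) := by
  have hIa : I b.1 a.1 := hsym _ _ hI
  have key : ∀ δ, δ = b.1 ∨ ¬ I b.1 δ →
      proj2 b.1 δ w = b :: (proj2 b.1 δ v ++ [letterInv G b]) := by
    intro δ hδ
    have hna : ¬ (a.1 = b.1 ∨ a.1 = δ) := by
      rintro (h | h)
      · exact hne h
      · rcases hδ with rfl | hnI
        · exact hne h
        · exact hnI (h ▸ hIa)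
    have hna' : ¬ ((letterInv G a).1 = b.1 ∨ (letterInv G a).1 = δ) := hna
    have hp := proj2_te hirr hsym (hδ.imp Eq.symm id) h3
    have e1 : proj2 b.1 δ (a :: (w ++ [letterInv G a])) = proj2 b.1 δ w := by
      rw [proj2_cons_neg hna, proj2_append, proj2_cons_neg hna', proj2_nil, List.append_nil]
    have e2 : proj2 b.1 δ (b :: (v ++ [letterInv G b]))
        = b :: (proj2 b.1 δ v ++ [letterInv G b]) := by
      rw [proj2_cons_pos (Or.inl rfl), proj2_append,
        proj2_cons_pos (show (letterInv G b).1 = b.1 ∨ (letterInv G b).1 = δ from Or.inl rfl), proj2_nil]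
    rw [e1, e2] at hp
    exact hp
  obtain ⟨z, hz⟩ := extract_front hirr hsym b w (fun δ hδ => ⟨_, key δ hδ⟩)
  have hz2 : ∀ δ, δ = b.1 ∨ ¬ I b.1 δ →
      proj2 b.1 δ z = proj2 b.1 δ v ++ [letterInv G b] := by
    intro δ hδ
    have hq := proj2_te hirr hsym (hδ.imp Eq.symm id) hz
    rw [key δ hδ, proj2_cons_pos (Or.inl rfl)] at hq
    injection hq with _ hq'
    exact hq'.symm
  obtain ⟨m, hm⟩ := extract_back hirr hsym (letterInv G b) z
    (fun δ hδ => ⟨proj2 b.1 δ v, hz2 δ hδ⟩)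
  exact ⟨m, te_trans_s6 hz (te_cons_congr b hm)⟩

lemma diamond (hirr : ∀ α, ¬ I α α) (hsym : ∀ α β, I α β → I β α)
    {x y z : List (Letter L G)}
    (h1 : ∃ a, TraceEquiv I G x (a :: (y ++ [letterInv G a])))
    (h2 : ∃ b, TraceEquiv I G x (b :: (z ++ [letterInv G b]))) :
    TraceEquiv I G y z ∨
      ∃ m n, (∃ a, TraceEquiv I G y (a :: (m ++ [letterInv G a]))) ∧
        (∃ b, TraceEquiv I G z (b :: (n ++ [letterInv G b]))) ∧ TraceEquiv I G m n := by
  obtain ⟨a, ha⟩ := h1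
  obtain ⟨b, hb⟩ := h2
  have h3 : TraceEquiv I G (a :: (y ++ [letterInv G a])) (b :: (z ++ [letterInv G b])) :=
    te_trans_s6 (te_symm_s6 ha) hb
  by_cases hab : a = b
  · subst hab
    left
    exact te_cancel_right hirr hsym (te_cancel_left hirr hsym h3)
  · by_cases hg : a.1 = b.1
    · exfalso
      have hp := proj2_te hirr hsym (Or.inl rfl) (γ := a.1) (δ := a.1) h3
      rw [proj2_cons_pos (Or.inl rfl), proj2_cons_pos (Or.inl hg.symm)] at hp
      injection hp with hp' _
      exact hab hp'
    · by_cases hI : I a.1 b.1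
      · obtain ⟨m, hy'⟩ := half hirr hsym hg hI h3
        obtain ⟨n, hz'⟩ := half hirr hsym (Ne.symm hg) (hsym _ _ hI) (te_symm_s6 h3)
        right
        refine ⟨m, n, ⟨b, hy'⟩, ⟨a, hz'⟩, ?_⟩
        have c1 : TraceEquiv I G (a :: (y ++ [letterInv G a]))
            (a :: b :: (m ++ [letterInv G b, letterInv G a])) := by
          have := te_cons_congr a (te_append_right [letterInv G a] hy')
          simpa [List.append_assoc] using this
        have c2 : TraceEquiv I G (b :: (z ++ [letterInv G b]))
            (b :: a :: (n ++ [letterInv G a, letterInv G b])) := by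
          have := te_cons_congr b (te_append_right [letterInv G b] hz')
          simpa [List.append_assoc] using this
        have c3 : TraceEquiv I G (a :: b :: (m ++ [letterInv G b, letterInv G a]))
            (b :: a :: (n ++ [letterInv G a, letterInv G b])) :=
          te_trans_s6 (te_symm_s6 c1) (te_trans_s6 h3 c2)
        have c4 := te_swap_head (I := I) (G := G) hI (m ++ [letterInv G b, letterInv G a])
        have c5 := te_trans_s6 (te_symm_s6 c4) c3
        have c6 := te_cancel_left hirr hsym (te_cancel_left hirr hsym c5)
        have c7 : TraceEquiv I G (m ++ [letterInv G b, letterInv G a])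
            (m ++ [letterInv G a, letterInv G b]) :=
          Relation.EqvGen.rel _ _
            (TraceStep.swap m [] (letterInv G b) (letterInv G a) (hsym _ _ hI))
        have c8 : TraceEquiv I G ((m ++ [letterInv G a]) ++ [letterInv G b])
            ((n ++ [letterInv G a]) ++ [letterInv G b]) := by
          simpa [List.append_assoc] using te_trans_s6 (te_symm_s6 c7) c6
        exact te_cancel_right hirr hsym (te_cancel_right hirr hsym c8)
      · exfalso
        have hp := proj2_te hirr hsym (Or.inr hI) (γ := a.1) (δ := b.1) h3
        rw [proj2_cons_pos (Or.inl rfl), proj2_cons_pos (Or.inr rfl)] at hp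
        injection hp with hp' _
        exact hab hp'

end Aux

/-- One cyclic-reduction step on words. -/
def RedW (x y : List (Letter L G)) : Prop :=
  ∃ a : Letter L G, TraceEquiv I G x (a :: (y ++ [letterInv G a]))

/-- Trace equivalence as a setoid. -/
def tSetoid : Setoid (List (Letter L G)) :=
  ⟨TraceEquiv I G, ⟨te_refl_s6, te_symm_s6, te_trans_s6⟩⟩

/-- Cyclic-reduction on trace-equivalence classes. -/
def RedT (X Y : Quotient (tSetoid I G)) : Prop :=
  ∃ x y, X = Quotient.mk (tSetoid I G) x ∧ Y = Quotient.mk (tSetoid I G) y ∧ RedW I G x y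

section Aux2

variable {I G}

lemma redW_congr {x x' y : List (Letter L G)} (h : TraceEquiv I G x x')
    (h2 : RedW I G x' y) : RedW I G x y := by
  obtain ⟨a, ha⟩ := h2
  exact ⟨a, te_trans_s6 h ha⟩

lemma wordInv_nil : wordInv G ([] : List (Letter L G)) = [] := rfl

lemma wordInv_cons (a : Letter L G) (p : List (Letter L G)) :
    wordInv G (a :: p) = wordInv G p ++ [letterInv G a] := by
  simp [wordInv]

lemma wordInv_append_single (p : List (Letter L G)) (a : Letter L G) :
    wordInv G (p ++ [a]) = letterInv G a :: wordInv G p := by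
  simp [wordInv]

lemma tmk_eq {x y : List (Letter L G)} (h : TraceEquiv I G x y) :
    Quotient.mk (tSetoid I G) x = Quotient.mk (tSetoid I G) y := Quot.sound h

lemma tmk_exact {x y : List (Letter L G)}
    (h : Quotient.mk (tSetoid I G) x = Quotient.mk (tSetoid I G) y) :
    TraceEquiv I G x y := Quotient.exact h

lemma diamondT (hirr : ∀ α, ¬ I α α) (hsym : ∀ α β, I α β → I β α) :
    ∀ X Y Z, RedT I G X Y → RedT I G X Z →
      ∃ D, Relation.ReflGen (RedT I G) Y D ∧ Relation.ReflTransGen (RedT I G) Z D := by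
  rintro X Y Z ⟨x, y, rfl, rfl, hxy⟩ ⟨x', z, hx, rfl, hxz⟩
  have hxx' : TraceEquiv I G x x' := Quotient.exact hx
  have hxz' : RedW I G x z := redW_congr hxx' hxz
  rcases diamond hirr hsym hxy hxz' with hyz | ⟨m, n, hm, hn, hmn⟩
  · refine ⟨Quotient.mk (tSetoid I G) z, ?_, Relation.ReflTransGen.refl⟩
    rw [tmk_eq hyz]
  · exact ⟨Quotient.mk (tSetoid I G) m,
      Relation.ReflGen.single ⟨y, m, rfl, rfl, hm⟩,
      Relation.ReflTransGen.single ⟨z, n, rfl, tmk_eq hmn, hn⟩⟩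

lemma reach (p : List (Letter L G)) :
    ∀ x v : List (Letter L G), TraceEquiv I G x (p ++ v ++ wordInv G p) →
      Relation.ReflTransGen (RedT I G) (Quotient.mk (tSetoid I G) x)
        (Quotient.mk (tSetoid I G) v) := by
  induction p with
  | nil =>
    intro x v h
    simp only [wordInv_nil, List.nil_append, List.append_nil] at h
    rw [tmk_eq h]
  | cons a p' ih =>
    intro x v h
    have step : RedW I G x (p' ++ v ++ wordInv G p') := by
      refine ⟨a, ?_⟩
      have e : (a :: p') ++ v ++ wordInv G (a :: p')
          = a :: ((p' ++ v ++ wordInv G p') ++ [letterInv G a]) := by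
        rw [wordInv_cons]
        simp [List.append_assoc]
      rw [e] at h
      exact h
    exact Relation.ReflTransGen.head ⟨x, _, rfl, rfl, step⟩ (ih _ _ (te_refl_s6 _))

end Aux2



theorem cyclic_core_exists_and_unique
    {L : Type} [Finite L] (I : L → L → Prop) (G : L → Type) [∀ α, Group (G α)]
    (hirr : ∀ α, ¬ I α α) (hsym : ∀ α β, I α β → I β α)
    (u : List (Letter L G)) (hu : Reduced I G u)
    (S : Set (List (Letter L G)))
    (hS : S = {v | ∃ p : List (Letter L G),
        TraceEquiv I G u (p ++ v ++ wordInv G p)}) :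
    S.Nonempty ∧
    (∀ ut ∈ S, (∀ v ∈ S, ut.length ≤ v.length) →
      ¬ ∃ (a : Letter L G) (w : List (Letter L G)),
          TraceEquiv I G ut (a :: (w ++ [letterInv G a]))) ∧
    (∀ u₁ ∈ S, ∀ u₂ ∈ S, (∀ v ∈ S, u₁.length ≤ v.length) →
      (∀ v ∈ S, u₂.length ≤ v.length) → TraceEquiv I G u₁ u₂) := by
  have memS : ∀ v, v ∈ S ↔ ∃ p, TraceEquiv I G u (p ++ v ++ wordInv G p) := by
    intro v
    rw [hS]
    exact Iff.rfl
  have huS : u ∈ S :=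
    (memS u).mpr ⟨[], by simpa [wordInv] using te_refl_s6 (I := I) (G := G) u⟩
  have closure : ∀ v, v ∈ S → ∀ m, RedW I G v m → m ∈ S := by
    intro v hv m hm
    obtain ⟨p, hp⟩ := (memS v).mp hv
    obtain ⟨a, ha⟩ := hm
    refine (memS m).mpr ⟨p ++ [a], ?_⟩
    have e : (p ++ [a]) ++ m ++ wordInv G (p ++ [a])
        = p ++ (a :: (m ++ [letterInv G a])) ++ wordInv G p := by
      rw [wordInv_append_single]
      simp [List.append_assoc]
    rw [e]
    exact te_trans_s6 hp (te_sandwich p (wordInv G p) ha)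
  have lenred : ∀ v m : List (Letter L G), RedW I G v m → v.length = m.length + 2 := by
    rintro v m ⟨a, ha⟩
    have h := te_length ha
    simp at h
    omega
  refine ⟨⟨u, huS⟩, ?_, ?_⟩
  · rintro ut hut hmin ⟨a, w, hw⟩
    have hwS : w ∈ S := closure ut hut w ⟨a, hw⟩
    have h1 := lenred ut w ⟨a, hw⟩
    have h2 := hmin w hwS
    omega
  · intro u₁ h₁ u₂ h₂ hm₁ hm₂
    have nf : ∀ (w : List (Letter L G)), w ∈ S → (∀ v ∈ S, w.length ≤ v.length) →
        ∀ Y, ¬ RedT I G (Quotient.mk (tSetoid I G) w) Y := by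
      rintro w hw hmin Y ⟨x, y, hx, rfl, hxy⟩
      have hwx : TraceEquiv I G w x := tmk_exact hx
      have hred : RedW I G w y := redW_congr hwx hxy
      have hyS : y ∈ S := closure w hw y hred
      have h1 := lenred w y hred
      have h2 := hmin y hyS
      omega
    obtain ⟨p₁, hp₁⟩ := (memS u₁).mp h₁
    obtain ⟨p₂, hp₂⟩ := (memS u₂).mp h₂
    have rt₁ := reach p₁ u u₁ hp₁
    have rt₂ := reach p₂ u u₂ hp₂
    obtain ⟨D, hD1, hD2⟩ := Relation.church_rosser (diamondT hirr hsym) rt₁ rt₂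
    rcases Relation.ReflTransGen.cases_head hD1 with h | ⟨c, hc, -⟩
    · rcases Relation.ReflTransGen.cases_head hD2 with h' | ⟨c, hc, -⟩
      · exact tmk_exact (h.trans h'.symm)
      · exact absurd hc (nf u₂ h₂ hm₂ c)
    · exact absurd hc (nf u₁ h₁ hm₁ c)
end

section
/- Let u ∈ Γ* be reduced. Then there exist reduced words p, r, m, s ∈ Γ*, a subset M ⊆ L of pairwise independent nodes (i.e. (α, β) ∈ I for all α ≠ β in M), and letters a_α, b_α ∈ Γ_α for each α ∈ M with b_α a_α ≠ 1 in G_α, such that: u ≡ p r m s p̄; r ≡ ∏_{α∈M} a_α and s ≡ ∏_{α∈M} b_α (in particular |r|_α = |s|_α ≤ 1 for all α ∈ L); the word m c is cyclically reduced, where c is the word consisting of the letters [b_α a_α] ∈ Γ_α for α ∈ M; and u is conjugate in G to the element represented by m c. -/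
variable {L : Type} (I : L → L → Prop) (G : L → Type) [∀ α, Group (G α)]

namespace CRD

variable {L : Type} {I : L → L → Prop} {G : L → Type} [∀ α, Group (G α)]

theorem step_symm (hsym : ∀ α β, I α β → I β α) {u v : List (Letter L G)}
    (h : TraceStep I G u v) : TraceStep I G v u := by
  cases h with
  | swap x y a b hab => exact TraceStep.swap x y b a (hsym _ _ hab)

theorem te_refl (u : List (Letter L G)) : TraceEquiv I G u u := Relation.EqvGen.refl u

theorem te_symm {u v : List (Letter L G)} (h : TraceEquiv I G u v) : TraceEquiv I G v u :=
  Relation.EqvGen.symm _ _ h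

theorem te_trans {u v w : List (Letter L G)} (h : TraceEquiv I G u v)
    (h' : TraceEquiv I G v w) : TraceEquiv I G u w := Relation.EqvGen.trans _ _ _ h h'

theorem te_of_step {u v : List (Letter L G)} (h : TraceStep I G u v) : TraceEquiv I G u v :=
  Relation.EqvGen.rel _ _ h

theorem te_rtg (hsym : ∀ α β, I α β → I β α) {u v : List (Letter L G)}
    (h : TraceEquiv I G u v) : Relation.ReflTransGen (TraceStep I G) u v := by
  induction h with
  | rel _ _ h => exact Relation.ReflTransGen.single h
  | refl => exact Relation.ReflTransGen.refl
  | symm a b _ ih =>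
      haveI : Std.Symm (TraceStep I G) := ⟨fun x y hxy => step_symm hsym hxy⟩
      exact Std.Symm.symm _ _ ih
  | trans a b c _ _ ih1 ih2 => exact ih1.trans ih2

theorem rtg_te {u v : List (Letter L G)}
    (h : Relation.ReflTransGen (TraceStep I G) u v) : TraceEquiv I G u v := by
  induction h with
  | refl => exact te_refl u
  | tail _ h ih => exact te_trans ih (te_of_step h)

theorem step_append_left {u v : List (Letter L G)} (w : List (Letter L G))
    (h : TraceStep I G u v) : TraceStep I G (w ++ u) (w ++ v) := by
  cases h with
  | swap x y a b hab =>
      rw [← List.append_assoc, ← List.append_assoc]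
      exact TraceStep.swap (w ++ x) y a b hab

theorem step_append_right {u v : List (Letter L G)} (w : List (Letter L G))
    (h : TraceStep I G u v) : TraceStep I G (u ++ w) (v ++ w) := by
  cases h with
  | swap x y a b hab =>
      have e1 : x ++ a :: b :: y ++ w = x ++ a :: b :: (y ++ w) := by simp
      have e2 : x ++ b :: a :: y ++ w = x ++ b :: a :: (y ++ w) := by simp
      rw [e1, e2]
      exact TraceStep.swap x (y ++ w) a b hab

theorem te_append_left {u v : List (Letter L G)} (w : List (Letter L G))
    (h : TraceEquiv I G u v) : TraceEquiv I G (w ++ u) (w ++ v) := by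
  induction h with
  | rel _ _ h => exact te_of_step (step_append_left w h)
  | refl => exact te_refl _
  | symm _ _ _ ih => exact te_symm ih
  | trans _ _ _ _ _ ih1 ih2 => exact te_trans ih1 ih2

theorem te_append_right {u v : List (Letter L G)} (w : List (Letter L G))
    (h : TraceEquiv I G u v) : TraceEquiv I G (u ++ w) (v ++ w) := by
  induction h with
  | rel _ _ h => exact te_of_step (step_append_right w h)
  | refl => exact te_refl _
  | symm _ _ _ ih => exact te_symm ih
  | trans _ _ _ _ _ ih1 ih2 => exact te_trans ih1 ih2

theorem te_append {u v u' v' : List (Letter L G)} (h : TraceEquiv I G u u')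
    (h' : TraceEquiv I G v v') : TraceEquiv I G (u ++ v) (u' ++ v') :=
  te_trans (te_append_right v h) (te_append_left u' h')

theorem te_cons {u v : List (Letter L G)} (x : Letter L G)
    (h : TraceEquiv I G u v) : TraceEquiv I G (x :: u) (x :: v) :=
  te_append_left [x] h

theorem te_length {u v : List (Letter L G)} (h : TraceEquiv I G u v) :
    u.length = v.length := by
  induction h with
  | rel _ _ h => cases h with | swap x y a b hab => simp
  | refl => rfl
  | symm _ _ _ ih => exact ih.symm
  | trans _ _ _ _ _ ih1 ih2 => exact ih1.trans ih2

theorem te_perm {u v : List (Letter L G)} (h : TraceEquiv I G u v) : u.Perm v := by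
  induction h with
  | rel _ _ h =>
      cases h with
      | swap x y a b hab => exact List.Perm.append_left x (List.Perm.swap b a y)
  | refl => exact List.Perm.refl _
  | symm _ _ _ ih => exact ih.symm
  | trans _ _ _ _ _ ih1 ih2 => exact ih1.trans ih2

theorem step_reverse (hsym : ∀ α β, I α β → I β α) {u v : List (Letter L G)}
    (h : TraceStep I G u v) : TraceStep I G u.reverse v.reverse := by
  cases h with
  | swap x y a b hab =>
      have e1 : (x ++ a :: b :: y).reverse = y.reverse ++ b :: a :: x.reverse := by simp
      have e2 : (x ++ b :: a :: y).reverse = y.reverse ++ a :: b :: x.reverse := by simp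
      rw [e1, e2]
      exact TraceStep.swap y.reverse x.reverse b a (hsym _ _ hab)

theorem te_reverse (hsym : ∀ α β, I α β → I β α) {u v : List (Letter L G)}
    (h : TraceEquiv I G u v) : TraceEquiv I G u.reverse v.reverse := by
  induction h with
  | rel _ _ h => exact te_of_step (step_reverse hsym h)
  | refl => exact te_refl _
  | symm _ _ _ ih => exact te_symm ih
  | trans _ _ _ _ _ ih1 ih2 => exact te_trans ih1 ih2

/-- move a letter from the right of an independent block to its left -/
theorem te_commute_out {W : List (Letter L G)} {x : Letter L G}
    (hW : ∀ c ∈ W, I c.1 x.1) : TraceEquiv I G (W ++ [x]) (x :: W) := by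
  induction W with
  | nil => exact te_refl _
  | cons c W ih =>
      have h1 : TraceEquiv I G (c :: (W ++ [x])) (c :: (x :: W)) :=
        te_cons c (ih (fun d hd => hW d (List.mem_cons_of_mem c hd)))
      have h2 : TraceStep I G ([] ++ c :: x :: W) ([] ++ x :: c :: W) :=
        TraceStep.swap [] W c x (hW c List.mem_cons_self)
      exact te_trans h1 (te_of_step h2)

theorem te_commute_in {W : List (Letter L G)} {x : Letter L G}
    (hW : ∀ c ∈ W, I c.1 x.1) : TraceEquiv I G (x :: W) (W ++ [x]) :=
  te_symm (te_commute_out hW)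

end CRD
namespace CRD

variable {L : Type} {I : L → L → Prop} {G : L → Type} [∀ α, Group (G α)]

/-- Comparing two one-marker decompositions of the same list. -/
theorem split_mark {τ : Type*} : ∀ {X : List τ} {Y A B : List τ} {x y : τ},
    X ++ x :: Y = A ++ y :: B →
    (∃ T, A = X ++ x :: T ∧ Y = T ++ y :: B) ∨ (X = A ∧ x = y ∧ Y = B) ∨
    (∃ T, X = A ++ y :: T ∧ B = T ++ x :: Y) := by
  intro X
  induction X with
  | nil =>
      intro Y A B x y h
      cases A with
      | nil => simp at h; exact Or.inr (Or.inl ⟨rfl, h.1, h.2⟩)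
      | cons a A' =>
          simp at h
          exact Or.inl ⟨A', by simp [h.1], h.2⟩
  | cons e X' ih =>
      intro Y A B x y h
      cases A with
      | nil =>
          simp at h
          exact Or.inr (Or.inr ⟨X', by simp [h.1], h.2.symm⟩)
      | cons f A' =>
          simp at h
          rcases ih h.2 with ⟨T, h1, h2⟩ | ⟨h1, h2, h3⟩ | ⟨T, h1, h2⟩
          · exact Or.inl ⟨T, by simp [h.1, h1], h2⟩
          · exact Or.inr (Or.inl ⟨by simp [h.1, h1], h2, h3⟩)
          · exact Or.inr (Or.inr ⟨T, by simp [h.1, h1], h2⟩)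

/-- Extraction of the first letter. -/
theorem extract_head (hsym : ∀ α β, I α β → I β α) {u t : List (Letter L G)}
    {x : Letter L G} (h : TraceEquiv I G u (x :: t)) :
    ∃ A B, u = A ++ x :: B ∧ (∀ c ∈ A, I c.1 x.1) ∧ TraceEquiv I G (A ++ B) t := by
  have h' := te_rtg hsym h
  clear h
  induction h' using Relation.ReflTransGen.head_induction_on with
  | refl => exact ⟨[], t, rfl, by simp, te_refl t⟩
  | head hstep _ ih =>
      obtain ⟨A, B, hAB, hind, hte⟩ := ih
      cases hstep with
      | swap X Y a b hab =>
          rcases split_mark (hAB ▸ rfl : X ++ b :: (a :: Y) = A ++ x :: B) with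
            ⟨T, h1, h2⟩ | ⟨h1, h2, h3⟩ | ⟨T, h1, h2⟩
          · -- A = X ++ b :: T,  a :: Y = T ++ x :: B
            rcases split_mark (show ([] : List (Letter L G)) ++ a :: Y = T ++ x :: B by
                simpa using h2) with ⟨T', h3, h4⟩ | ⟨h3, h4, h5⟩ | ⟨T', h3, h4⟩
            · -- T = a :: T',  Y = T' ++ x :: B  (marker inside Y)
              have h3' : T = a :: T' := by simpa using h3
              refine ⟨X ++ a :: b :: T', B, by simp [h4], ?_, ?_⟩
              · intro c hc
                simp only [List.mem_append, List.mem_cons] at hc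
                rcases hc with hc | hc | hc | hc
                · exact hind c (by rw [h1]; simp [hc])
                · subst hc; exact hind c (by rw [h1, h3']; simp)
                · subst hc; exact hind c (by rw [h1]; simp)
                · exact hind c (by rw [h1, h3']; simp [hc])
              · have e : A ++ B = X ++ b :: a :: (T' ++ B) := by rw [h1, h3']; simp
                have st : TraceStep I G (X ++ a :: b :: (T' ++ B)) (X ++ b :: a :: (T' ++ B)) :=
                  TraceStep.swap X (T' ++ B) a b hab
                refine te_trans ?_ (e ▸ hte)
                exact (by simpa using te_of_step st)
            · -- T = [], a = x, Y = B   (marker is the a-position)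
              have h3' : T = ([] : List (Letter L G)) := h3.symm
              refine ⟨X, b :: Y, by rw [← h4], ?_, ?_⟩
              · intro c hc
                exact hind c (by rw [h1]; simp [hc])
              · have e : A ++ B = X ++ b :: Y := by rw [h1, h3', h5]; simp
                exact e ▸ hte
            · -- [] = T ++ x :: T' : impossible
              exact absurd h3 (by simp)
          · -- X = A, b = x, B = a :: Y  (marker is the b-position)
            refine ⟨X ++ [a], Y, by rw [← h2]; simp, ?_, ?_⟩
            · intro c hc
              simp only [List.mem_append, List.mem_singleton] at hc
              rcases hc with hc | hc
              · exact hind c (h1 ▸ hc)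
              · subst hc; exact h2 ▸ hab
            · have e : X ++ [a] ++ Y = A ++ B := by rw [← h3, ← h1]; simp
              rw [e]; exact hte
          · -- X = A ++ x :: T, B = T ++ b :: a :: Y  (marker inside X)
            refine ⟨A, T ++ a :: b :: Y, by simp [h1], hind, ?_⟩
            have e : A ++ B = (A ++ T) ++ b :: a :: Y := by rw [h2]; simp
            have st : TraceStep I G ((A ++ T) ++ a :: b :: Y) ((A ++ T) ++ b :: a :: Y) :=
              TraceStep.swap (A ++ T) Y a b hab
            refine te_trans ?_ (e ▸ hte)
            exact (by simpa using te_of_step st)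

theorem extract_last (hsym : ∀ α β, I α β → I β α) {u t : List (Letter L G)}
    {x : Letter L G} (h : TraceEquiv I G u (t ++ [x])) :
    ∃ A B, u = A ++ x :: B ∧ (∀ c ∈ B, I c.1 x.1) ∧ TraceEquiv I G (A ++ B) t := by
  have h1 : TraceEquiv I G u.reverse (x :: t.reverse) := by
    have := te_reverse hsym h
    simpa using this
  obtain ⟨A, B, hAB, hind, hte⟩ := extract_head hsym h1
  refine ⟨B.reverse, A.reverse, ?_, by simpa using hind, ?_⟩
  · have : u.reverse.reverse = (A ++ x :: B).reverse := by rw [hAB]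
    simpa using this
  · have := te_reverse hsym hte
    simpa using this

end CRD
namespace CRD

variable {L : Type} {I : L → L → Prop} {G : L → Type} [∀ α, Group (G α)]

theorem split_cut {τ : Type*} : ∀ {A : List τ} {B C D : List τ},
    A ++ B = C ++ D →
    (∃ T, C = A ++ T ∧ B = T ++ D) ∨ (∃ T, A = C ++ T ∧ D = T ++ B) := by
  intro A
  induction A with
  | nil => intro B C D h; exact Or.inl ⟨C, rfl, h⟩
  | cons e A' ih =>
      intro B C D h
      cases C with
      | nil => exact Or.inr ⟨e :: A', rfl, h.symm⟩
      | cons f C' =>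
          simp at h
          rcases ih h.2 with ⟨T, h1, h2⟩ | ⟨T, h1, h2⟩
          · exact Or.inl ⟨T, by simp [h.1, h1], h2⟩
          · exact Or.inr ⟨T, by simp [h.1, h1], h2⟩

/-- If `u` is trace equivalent to a word with two adjacent letters of the same
node group, then `u` is not reduced. -/
theorem not_reduced_of_te_pair (hirr : ∀ α, ¬ I α α) (hsym : ∀ α β, I α β → I β α)
    {β : L} {b b' : {g : G β // g ≠ 1}} :
    ∀ (X : List (Letter L G)) {u Y : List (Letter L G)},
    TraceEquiv I G u (X ++ (⟨β, b⟩ : Letter L G) :: (⟨β, b'⟩ : Letter L G) :: Y) →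
    ∃ (A W C : List (Letter L G)),
      u = A ++ (⟨β, b⟩ : Letter L G) :: (W ++ (⟨β, b'⟩ : Letter L G) :: C) ∧
      IndepWord I G β W := by
  intro X
  induction X with
  | nil =>
      intro u Y h
      obtain ⟨A, B, hAB, hind, hte⟩ := extract_head hsym (by simpa using h)
      obtain ⟨A₁, B₁, hAB₁, hind₁, _⟩ := extract_head hsym hte
      rcases split_cut hAB₁ with ⟨T, h1, h2⟩ | ⟨T, h1, h2⟩
      · -- A₁ = A ++ T, B = T ++ b' :: B₁
        refine ⟨A, T, B₁, by rw [hAB, h2], ?_⟩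
        intro c hc
        exact hind₁ c (by rw [h1]; simp [hc])
      · -- A = A₁ ++ T, b' :: B₁ = T ++ B
        cases T with
        | nil =>
            simp at h2
            refine ⟨A, [], B₁, by rw [hAB, ← h2]; simp, by simp [IndepWord]⟩
        | cons f T' =>
            have hf : f = (⟨β, b'⟩ : Letter L G) := by
              have := congrArg (fun l => l.head?) h2; simpa using this.symm
            exfalso
            refine hirr β ?_
            have : I f.1 β := hind f (by rw [h1]; simp)
            rw [hf] at this; exact this
  | cons x X' ih =>
      intro u Y h
      obtain ⟨A, B, hAB, hind, hte⟩ := extract_head hsym (by simpa using h)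
      obtain ⟨A₂, W, C, hACW, hW⟩ := ih hte
      have hxb : (⟨β, b⟩ : Letter L G) ∈ A₂ ++ (⟨β, b⟩ : Letter L G) :: (W ++ (⟨β, b'⟩ : Letter L G) :: C) := by simp
      rcases split_cut hACW with ⟨T, h1, h2⟩ | ⟨T, h1, h2⟩
      · -- A₂ = A ++ T, B = T ++ b :: (W ++ b' :: C) : x before the window
        refine ⟨A ++ x :: T, W, C, by rw [hAB, h2]; simp, hW⟩
      · -- A = A₂ ++ T, b :: (W ++ b' :: C) = T ++ B
        cases T with
        | nil =>
            simp at h1 h2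
            refine ⟨A₂ ++ [x], W, C, by rw [hAB, h1, ← h2]; simp, hW⟩
        | cons f T' =>
            have hf : f = (⟨β, b⟩ : Letter L G) := by
              have := congrArg (fun l => l.head?) h2; simpa using this.symm
            subst hf
            have hIxβ : I x.1 β := by
              have : I (⟨β, b⟩ : Letter L G).1 x.1 := hind _ (by rw [h1]; simp)
              exact hsym _ _ this
            have h2' : W ++ (⟨β, b'⟩ : Letter L G) :: C = T' ++ B := by
              have := congrArg List.tail h2; simpa using this
            rcases split_cut h2' with ⟨S, h3, h4⟩ | ⟨S, h3, h4⟩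
            · -- T' = W ++ S, b' :: C = S ++ B
              cases S with
              | nil =>
                  simp at h3 h4
                  refine ⟨A₂, W ++ [x], C, by rw [hAB, h1, h3, ← h4]; simp, ?_⟩
                  intro c hc
                  simp only [List.mem_append, List.mem_singleton] at hc
                  rcases hc with hc | hc
                  · exact hW c hc
                  · subst hc; exact hIxβ
              | cons g S' =>
                  have hg : g = (⟨β, b'⟩ : Letter L G) := by
                    have := congrArg (fun l => l.head?) h4; simpa using this.symm
                  subst hg
                  have h4' : C = S' ++ B := by
                    have := congrArg List.tail h4; simpa using this
                  refine ⟨A₂, W, S' ++ x :: B, ?_, hW⟩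
                  rw [hAB, h1, h3]; simp
            · -- W = T' ++ S, B = S ++ b' :: C : x inside the window
              refine ⟨A₂, T' ++ x :: S, C, by rw [hAB, h1, h4]; simp, ?_⟩
              intro c hc
              simp only [List.mem_append, List.mem_cons] at hc
              rcases hc with hc | hc | hc
              · exact hW c (by rw [h3]; simp [hc])
              · subst hc; exact hIxβ
              · exact hW c (by rw [h3]; simp [hc])

/-- Reducedness is invariant under trace equivalence. -/
theorem reduced_te (hirr : ∀ α, ¬ I α α) (hsym : ∀ α β, I α β → I β α)
    {u v : List (Letter L G)} (h : TraceEquiv I G u v) (hu : Reduced I G u) :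
    Reduced I G v := by
  rintro ⟨β, b, b', X, W, Y, hdec, hIW⟩
  have h1 : TraceEquiv I G v (X ++ (⟨β, b⟩ : Letter L G) :: (⟨β, b'⟩ : Letter L G) :: (W ++ Y)) := by
    rw [hdec]
    refine te_append_left X (te_cons _ ?_)
    have h2 : TraceEquiv I G (W ++ [(⟨β, b'⟩ : Letter L G)]) ((⟨β, b'⟩ : Letter L G) :: W) :=
      te_commute_out (fun c hc => hIW c hc)
    have := te_append_right Y h2
    simpa using this
  obtain ⟨A, W', C, hd, hi⟩ := not_reduced_of_te_pair hirr hsym X (te_trans h h1)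
  exact hu ⟨β, b, b', A, W', C, hd, hi⟩

/-- A factor of a reduced word is reduced. -/
theorem reduced_factor {X Y Z : List (Letter L G)} (h : Reduced I G (X ++ Y ++ Z)) :
    Reduced I G Y := by
  rintro ⟨β, b, b', A, W, C, hdec, hIW⟩
  refine h ⟨β, b, b', X ++ A, W, C ++ Z, ?_, hIW⟩
  rw [hdec]; simp

theorem reduced_nil : Reduced I G ([] : List (Letter L G)) := by
  rintro ⟨β, b, b', A, W, C, hdec, -⟩
  exact absurd hdec.symm (by simp)

/-- A word whose letters lie in pairwise distinct node groups is reduced. -/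
theorem reduced_of_nodup (w : List (Letter L G))
    (h : (w.map Sigma.fst).Nodup) : Reduced I G w := by
  rintro ⟨β, b, b', A, W, C, hdec, -⟩
  rw [hdec] at h
  simp [List.nodup_append] at h

end CRD
namespace CRD

variable {L : Type} {I : L → L → Prop} {G : L → Type} [∀ α, Group (G α)]

theorem gpOf_comm {α β : L} (h : I α β) (g : G α) (k : G β) :
    gpOf I G α g * gpOf I G β k = gpOf I G β k * gpOf I G α g := by
  have hrel : Monoid.CoprodI.of g * Monoid.CoprodI.of k *
      (Monoid.CoprodI.of g)⁻¹ * (Monoid.CoprodI.of k)⁻¹ ∈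
      Subgroup.normalClosure (gpRels I G) :=
    Subgroup.subset_normalClosure ⟨α, β, g, k, h, rfl⟩
  have h1 : (QuotientGroup.mk' (Subgroup.normalClosure (gpRels I G)))
      (Monoid.CoprodI.of g * Monoid.CoprodI.of k *
      (Monoid.CoprodI.of g)⁻¹ * (Monoid.CoprodI.of k)⁻¹) = 1 := by
    rwa [QuotientGroup.mk'_apply, QuotientGroup.eq_one_iff]
  set Q := QuotientGroup.mk' (Subgroup.normalClosure (gpRels I G)) with hQ
  have h2 : Q (Monoid.CoprodI.of g) * Q (Monoid.CoprodI.of k) *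
      (Q (Monoid.CoprodI.of g))⁻¹ * (Q (Monoid.CoprodI.of k))⁻¹ = 1 := by
    simpa [map_mul] using h1
  have h3 : (Q (Monoid.CoprodI.of g) * Q (Monoid.CoprodI.of k)) *
      (Q (Monoid.CoprodI.of k) * Q (Monoid.CoprodI.of g))⁻¹ = 1 := by
    rw [mul_inv_rev]
    calc (Q (Monoid.CoprodI.of g) * Q (Monoid.CoprodI.of k)) *
        ((Q (Monoid.CoprodI.of g))⁻¹ * (Q (Monoid.CoprodI.of k))⁻¹)
        = Q (Monoid.CoprodI.of g) * Q (Monoid.CoprodI.of k) *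
          (Q (Monoid.CoprodI.of g))⁻¹ * (Q (Monoid.CoprodI.of k))⁻¹ := by
          simp [mul_assoc]
      _ = 1 := h2
  have h4 := mul_inv_eq_one.mp h3
  exact h4

theorem evalWord_append (u v : List (Letter L G)) :
    evalWord I G (u ++ v) = evalWord I G u * evalWord I G v := by
  simp [evalWord]

theorem evalWord_cons (x : Letter L G) (u : List (Letter L G)) :
    evalWord I G (x :: u) = gpOf I G x.1 x.2.1 * evalWord I G u := by
  simp [evalWord]

theorem te_eval {u v : List (Letter L G)} (h : TraceEquiv I G u v) :
    evalWord I G u = evalWord I G v := by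
  induction h with
  | rel _ _ h =>
      cases h with
      | swap X Y a b hab =>
          simp only [evalWord, List.map_append, List.prod_append, List.map_cons,
            List.prod_cons]
          have hc := gpOf_comm hab a.2.1 b.2.1
          have key : ∀ (P A B Q : GP I G), A * B = B * A → P * (A * (B * Q)) = P * (B * (A * Q)) := by
            intro P A B Q h
            rw [← mul_assoc A, h, mul_assoc]
          exact key _ _ _ _ hc
  | refl => rfl
  | symm _ _ _ ih => exact ih.symm
  | trans _ _ _ _ _ ih1 ih2 => exact ih1.trans ih2

/-- an element of a node group commutes with a word independent of that node -/
theorem gpOf_comm_word {γ : L} (g : G γ) {w : List (Letter L G)}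
    (hw : ∀ c ∈ w, I c.1 γ) :
    evalWord I G w * gpOf I G γ g = gpOf I G γ g * evalWord I G w := by
  induction w with
  | nil => simp [evalWord]
  | cons c w ih =>
      rw [evalWord_cons, mul_assoc, ih (fun d hd => hw d (List.mem_cons_of_mem c hd)),
        ← mul_assoc, gpOf_comm (hw c List.mem_cons_self), mul_assoc]

/-- trace equivalence from permutations of words with pairwise-independent,
pairwise-distinct nodes -/
theorem te_of_perm : ∀ {u v : List (Letter L G)}, u.Perm v →
    ((u.map Sigma.fst).Nodup) → (∀ x ∈ u, ∀ y ∈ u, x.1 ≠ y.1 → I x.1 y.1) →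
    TraceEquiv I G u v := by
  intro u v hp
  induction hp with
  | nil => intro _ _; exact te_refl _
  | cons x p ih =>
      intro hnd hind
      refine te_cons x (ih ?_ ?_)
      · simp only [List.map_cons, List.nodup_cons] at hnd; exact hnd.2
      · intro a ha b hb hab
        exact hind a (List.mem_cons_of_mem x ha) b (List.mem_cons_of_mem x hb) hab
  | swap x y l =>
      intro hnd hind
      have hxy : y.1 ≠ x.1 := by
        simp only [List.map_cons, List.nodup_cons] at hnd
        intro h; exact hnd.1 (by simp [h])
      have : I y.1 x.1 := hind y (by simp) x (by simp) hxy
      exact te_of_step (TraceStep.swap [] l y x this)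
  | trans p q ih1 ih2 =>
      intro hnd hind
      refine te_trans (ih1 hnd hind) (ih2 ?_ ?_)
      · exact (p.map Sigma.fst).nodup_iff.mp hnd
      · intro a ha b hb hab
        exact hind a (p.symm.mem_iff.mp ha) b (p.symm.mem_iff.mp hb) hab

end CRD
namespace CRD

variable {L : Type} {I : L → L → Prop} {G : L → Type} [∀ α, Group (G α)]

theorem perm_pmap {τ σ : Type*} {p : τ → Prop} (f : ∀ a, p a → σ) :
    ∀ {l₁ l₂ : List τ}, l₁.Perm l₂ → ∀ (H₁ : ∀ a ∈ l₁, p a) (H₂ : ∀ a ∈ l₂, p a),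
    (l₁.pmap f H₁).Perm (l₂.pmap f H₂) := by
  intro l₁ l₂ hp
  induction hp with
  | nil => intro _ _; exact List.Perm.refl _
  | cons x _ ih => intro H₁ H₂; exact List.Perm.cons _ (ih _ _)
  | swap x y l => intro H₁ H₂; exact List.Perm.swap _ _ _
  | trans p₁ p₂ ih₁ ih₂ =>
      intro H₁ H₂
      exact (ih₁ H₁ (fun a ha => H₁ a (p₁.mem_iff.mpr ha))).trans
        (ih₂ (fun a ha => H₂ a (p₂.mem_iff.mp ha)) H₂)

section listOf
variable [DecidableEq L]

noncomputable def listOf (M : Finset L) (f : ∀ γ ∈ M, {g : G γ // g ≠ 1}) : List (Letter L G) :=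
  M.toList.attach.map fun x => (⟨x.1, f x.1 (Finset.mem_toList.mp x.2)⟩ : Letter L G)

theorem listOf_eq_pmap (M : Finset L) (f : ∀ γ ∈ M, {g : G γ // g ≠ 1}) :
    listOf M f = M.toList.pmap
      (fun γ h => (⟨γ, f γ (Finset.mem_toList.mp h)⟩ : Letter L G)) (fun _ h => h) := by
  rw [List.pmap_eq_map_attach]; rfl

theorem listOf_map_fst (M : Finset L) (f : ∀ γ ∈ M, {g : G γ // g ≠ 1}) :
    (listOf M f).map Sigma.fst = M.toList := by
  rw [listOf_eq_pmap]
  simp [List.map_pmap, List.pmap_eq_map]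

theorem listOf_nodes_nodup (M : Finset L) (f : ∀ γ ∈ M, {g : G γ // g ≠ 1}) :
    ((listOf M f).map Sigma.fst).Nodup := by
  rw [listOf_map_fst]; exact M.nodup_toList

theorem mem_listOf_fst {M : Finset L} {f : ∀ γ ∈ M, {g : G γ // g ≠ 1}}
    {l : Letter L G} (h : l ∈ listOf M f) : l.1 ∈ M := by
  have : l.1 ∈ (listOf M f).map Sigma.fst := List.mem_map_of_mem h
  rw [listOf_map_fst] at this
  exact Finset.mem_toList.mp this

theorem fst_mem_listOf {M : Finset L} (f : ∀ γ ∈ M, {g : G γ // g ≠ 1})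
    {δ : L} (h : δ ∈ M) : ∃ l ∈ listOf M f, l.1 = δ := by
  have : δ ∈ (listOf M f).map Sigma.fst := by rw [listOf_map_fst]; exact Finset.mem_toList.mpr h
  obtain ⟨l, hl, he⟩ := List.mem_map.mp this
  exact ⟨l, hl, he⟩

theorem reduced_listOf (M : Finset L) (f : ∀ γ ∈ M, {g : G γ // g ≠ 1}) :
    Reduced I G (listOf M f) :=
  reduced_of_nodup _ (listOf_nodes_nodup M f)

theorem listOf_congr {M : Finset L} {f g : ∀ γ ∈ M, {g : G γ // g ≠ 1}}
    (h : ∀ γ (hγ : γ ∈ M), f γ hγ = g γ hγ) : listOf M f = listOf M g := by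
  unfold listOf
  exact List.map_congr_left fun x _ => by rw [h]

/-- extension of a letter family along an insert -/
def extFam (α : L) (xα : {g : G α // g ≠ 1}) (M : Finset L)
    (f : ∀ γ ∈ M, {g : G γ // g ≠ 1}) : ∀ γ ∈ insert α M, {g : G γ // g ≠ 1} :=
  fun γ h =>
    if e : γ = α then (by rw [e]; exact xα)
    else f γ ((Finset.mem_insert.mp h).resolve_left e)

theorem extFam_self {α : L} {xα : {g : G α // g ≠ 1}} {M : Finset L}
    {f : ∀ γ ∈ M, {g : G γ // g ≠ 1}} (h : α ∈ insert α M) :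
    extFam α xα M f α h = xα := by
  unfold extFam
  rw [dif_pos rfl]
  rfl

theorem extFam_ne {α : L} {xα : {g : G α // g ≠ 1}} {M : Finset L}
    {f : ∀ γ ∈ M, {g : G γ // g ≠ 1}} {γ : L} (hγ : γ ∈ insert α M) (hne : γ ≠ α)
    (hγM : γ ∈ M) : extFam α xα M f γ hγ = f γ hγM := by
  unfold extFam
  rw [dif_neg hne]

theorem listOf_insert_perm {α : L} {M : Finset L} (hα : α ∉ M)
    (f : ∀ γ ∈ insert α M, {g : G γ // g ≠ 1}) :
    (listOf (insert α M) f).Perm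
      ((⟨α, f α (Finset.mem_insert_self α M)⟩ : Letter L G) ::
        listOf M (fun γ h => f γ (Finset.mem_insert_of_mem h))) := by
  rw [listOf_eq_pmap, listOf_eq_pmap]
  have hperm := Finset.toList_insert hα
  have h1 := perm_pmap
    (fun γ (h : γ ∈ insert α M) => (⟨γ, f γ h⟩ : Letter L G))
    hperm (fun a ha => Finset.mem_toList.mp ha)
    (fun a ha => by
      rcases List.mem_cons.mp ha with h | h
      · rw [h]; exact Finset.mem_insert_self α M
      · exact Finset.mem_insert_of_mem (Finset.mem_toList.mp h))
  refine List.Perm.trans ?_ (h1.trans ?_)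
  · apply List.Perm.of_eq
    apply List.pmap_congr_left
    intro a ha h₁ h₂
    rfl
  · simp only [List.pmap]
    apply List.Perm.cons
    apply List.Perm.of_eq
    apply List.pmap_congr_left
    intro a ha h₁ h₂
    rfl

end listOf

/-- `m` has an initial letter in `Γ γ` up to trace equivalence. -/
def HasInit (I : L → L → Prop) (γ : L) (m : List (Letter L G)) : Prop :=
  ∃ (x : {g : G γ // g ≠ 1}) (w : List (Letter L G)),
    TraceEquiv I G m ((⟨γ, x⟩ : Letter L G) :: w)

def HasFin (I : L → L → Prop) (γ : L) (m : List (Letter L G)) : Prop :=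
  ∃ (x : {g : G γ // g ≠ 1}) (w : List (Letter L G)),
    TraceEquiv I G m (w ++ [(⟨γ, x⟩ : Letter L G)])

def Pinch (I : L → L → Prop) (γ : L) (m : List (Letter L G)) : Prop :=
  ∃ (x x' : {g : G γ // g ≠ 1}) (w : List (Letter L G)),
    TraceEquiv I G m ((⟨γ, x⟩ : Letter L G) :: (w ++ [(⟨γ, x'⟩ : Letter L G)]))

theorem te_pull_front {A B : List (Letter L G)} {x : Letter L G}
    (hA : ∀ c ∈ A, I c.1 x.1) : TraceEquiv I G (A ++ x :: B) (x :: (A ++ B)) := by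
  have h := te_append_right B (te_commute_out hA)
  simpa using h

theorem te_push_back {A B : List (Letter L G)} {x : Letter L G}
    (hB : ∀ c ∈ B, I c.1 x.1) : TraceEquiv I G (A ++ x :: B) ((A ++ B) ++ [x]) := by
  have h := te_append_left A (te_commute_in hB)
  simpa using h

end CRD
namespace CRD

variable {L : Type} {I : L → L → Prop} {G : L → Type} [∀ α, Group (G α)] [DecidableEq L]

theorem listOf_empty (f : ∀ γ ∈ (∅ : Finset L), {g : G γ // g ≠ 1}) :
    listOf (G := G) ∅ f = [] := by
  apply List.eq_nil_of_length_eq_zero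
  simp [listOf]

theorem eval_listOf_insert {α : L} {M : Finset L} (hα : α ∉ M)
    (f : ∀ γ ∈ insert α M, {g : G γ // g ≠ 1})
    (hp : ∀ γ ∈ insert α M, ∀ δ ∈ insert α M, γ ≠ δ → I γ δ) :
    evalWord I G (listOf (insert α M) f) =
      gpOf I G α (f α (Finset.mem_insert_self α M)).1 *
        evalWord I G (listOf M (fun γ h => f γ (Finset.mem_insert_of_mem h))) := by
  have hte : TraceEquiv I G (listOf (insert α M) f)
      ((⟨α, f α (Finset.mem_insert_self α M)⟩ : Letter L G) ::
        listOf M (fun γ h => f γ (Finset.mem_insert_of_mem h))) := by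
    refine te_of_perm (listOf_insert_perm hα f) (listOf_nodes_nodup _ _) ?_
    intro x hx y hy hxy
    exact hp x.1 (mem_listOf_fst hx) y.1 (mem_listOf_fst hy) hxy
  rw [te_eval hte, evalWord_cons]

theorem eval_listOf_mul (M : Finset L)
    (hp : ∀ γ ∈ M, ∀ δ ∈ M, γ ≠ δ → I γ δ)
    (fa fb : ∀ γ ∈ M, {g : G γ // g ≠ 1})
    (hba : ∀ γ (h : γ ∈ M), (fb γ h : G γ) * (fa γ h : G γ) ≠ 1) :
    evalWord I G (listOf M fb) * evalWord I G (listOf M fa) =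
      evalWord I G (listOf M (fun γ h => ⟨(fb γ h : G γ) * (fa γ h : G γ), hba γ h⟩)) := by
  induction M using Finset.induction_on with
  | empty => simp [listOf_empty, evalWord]
  | @insert α M hα ih =>
      have hpM : ∀ γ ∈ M, ∀ δ ∈ M, γ ≠ δ → I γ δ := fun γ hγ δ hδ =>
        hp γ (Finset.mem_insert_of_mem hγ) δ (Finset.mem_insert_of_mem hδ)
      rw [eval_listOf_insert hα fa hp, eval_listOf_insert hα fb hp,
        eval_listOf_insert hα _ hp]
      have hcomm : evalWord I G (listOf M (fun γ h => fb γ (Finset.mem_insert_of_mem h))) *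
          gpOf I G α (fa α (Finset.mem_insert_self α M)).1 =
          gpOf I G α (fa α (Finset.mem_insert_self α M)).1 *
          evalWord I G (listOf M (fun γ h => fb γ (Finset.mem_insert_of_mem h))) := by
        refine gpOf_comm_word _ ?_
        intro c hc
        have hcM := mem_listOf_fst hc
        refine hp c.1 (Finset.mem_insert_of_mem hcM) α (Finset.mem_insert_self α M) ?_
        intro h; exact hα (h ▸ hcM)
      have ihx := ih hpM (fun γ h => fa γ (Finset.mem_insert_of_mem h))
        (fun γ h => fb γ (Finset.mem_insert_of_mem h))
        (fun γ h => hba γ (Finset.mem_insert_of_mem h))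
      calc gpOf I G α (fb α (Finset.mem_insert_self α M)).1 *
            evalWord I G (listOf M (fun γ h => fb γ (Finset.mem_insert_of_mem h))) *
            (gpOf I G α (fa α (Finset.mem_insert_self α M)).1 *
            evalWord I G (listOf M (fun γ h => fa γ (Finset.mem_insert_of_mem h))))
          = gpOf I G α (fb α (Finset.mem_insert_self α M)).1 *
            (evalWord I G (listOf M (fun γ h => fb γ (Finset.mem_insert_of_mem h))) *
            gpOf I G α (fa α (Finset.mem_insert_self α M)).1) *
            evalWord I G (listOf M (fun γ h => fa γ (Finset.mem_insert_of_mem h))) := by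
            simp [mul_assoc]
        _ = gpOf I G α (fb α (Finset.mem_insert_self α M)).1 *
            (gpOf I G α (fa α (Finset.mem_insert_self α M)).1 *
            evalWord I G (listOf M (fun γ h => fb γ (Finset.mem_insert_of_mem h)))) *
            evalWord I G (listOf M (fun γ h => fa γ (Finset.mem_insert_of_mem h))) := by
            rw [hcomm]
        _ = (gpOf I G α (fb α (Finset.mem_insert_self α M)).1 *
            gpOf I G α (fa α (Finset.mem_insert_self α M)).1) *
            (evalWord I G (listOf M (fun γ h => fb γ (Finset.mem_insert_of_mem h))) *
            evalWord I G (listOf M (fun γ h => fa γ (Finset.mem_insert_of_mem h)))) := by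
            simp [mul_assoc]
        _ = gpOf I G α ((fb α (Finset.mem_insert_self α M)).1 *
            (fa α (Finset.mem_insert_self α M)).1) *
            evalWord I G (listOf M (fun γ h =>
              (⟨(fb γ (Finset.mem_insert_of_mem h) : G γ) *
                (fa γ (Finset.mem_insert_of_mem h) : G γ),
                hba γ (Finset.mem_insert_of_mem h)⟩ : {g : G γ // g ≠ 1}))) := by
            rw [← map_mul, ihx]

end CRD
namespace CRD

variable {L : Type} {I : L → L → Prop} {G : L → Type} [∀ α, Group (G α)] [DecidableEq L]

theorem main2 (hirr : ∀ α, ¬ I α α) (hsym : ∀ α β, I α β → I β α) :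
    ∀ (n : ℕ) (u : List (Letter L G)), u.length = n → Reduced I G u →
    ∀ (N : Finset L),
    (∀ γ ∈ N, ∀ δ ∈ N, γ ≠ δ → I γ δ) →
    (∀ γ ∈ N, ¬ HasInit I γ u ∧ ¬ HasFin I γ u) →
    (∀ (γ : L), (∀ δ ∈ N, I γ δ) →
      ∀ (x x' : {g : G γ // g ≠ 1}) (w : List (Letter L G)),
        TraceEquiv I G u ((⟨γ, x⟩ : Letter L G) :: (w ++ [(⟨γ, x'⟩ : Letter L G)])) →
        (x' : G γ) * (x : G γ) ≠ 1) →
    ∃ (M : Finset L) (a b : ∀ γ ∈ M, {g : G γ // g ≠ 1}) (m : List (Letter L G)),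
      (∀ γ ∈ M, ∀ δ ∈ M, γ ≠ δ → I γ δ) ∧
      (∀ γ ∈ M, ∀ δ ∈ N, γ ≠ δ ∧ I γ δ) ∧
      (∀ γ (h : γ ∈ M), (b γ h : G γ) * (a γ h : G γ) ≠ 1) ∧
      TraceEquiv I G u (listOf M a ++ m ++ listOf M b) ∧
      (∀ γ, (γ ∈ N ∨ γ ∈ M) → ¬ HasInit I γ m ∧ ¬ HasFin I γ m) ∧
      (∀ γ, (∀ δ, (δ ∈ N ∨ δ ∈ M) → I γ δ) → ¬ Pinch I γ m) := by
  intro n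
  induction n using Nat.strong_induction_on with
  | _ n ihn =>
  intro u hlen hu N hNp hN3 hN4
  by_cases hp : ∃ (γ : L) (x x' : {g : G γ // g ≠ 1}) (w : List (Letter L G)),
      (∀ δ ∈ N, I γ δ) ∧
      TraceEquiv I G u ((⟨γ, x⟩ : Letter L G) :: (w ++ [(⟨γ, x'⟩ : Letter L G)]))
  · obtain ⟨α, aL, bL, v, hcomp, hte⟩ := hp
    have hαN : α ∉ N := fun h => hirr α (hcomp α h)
    have hured : Reduced I G ((⟨α, aL⟩ : Letter L G) :: (v ++ [(⟨α, bL⟩ : Letter L G)])) :=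
      reduced_te hirr hsym hte hu
    have hvred : Reduced I G v := by
      have h2 : (⟨α, aL⟩ : Letter L G) :: (v ++ [(⟨α, bL⟩ : Letter L G)]) =
          [(⟨α, aL⟩ : Letter L G)] ++ v ++ [(⟨α, bL⟩ : Letter L G)] := by simp
      exact reduced_factor (h2 ▸ hured)
    have hvlen : v.length < n := by
      have := te_length hte; simp at this; omega
    have hN'p : ∀ γ ∈ insert α N, ∀ δ ∈ insert α N, γ ≠ δ → I γ δ := by
      intro γ hγ δ hδ hne
      rcases Finset.mem_insert.mp hγ with hγα | hγN
      · rcases Finset.mem_insert.mp hδ with hδα | hδN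
        · exact absurd (hγα.trans hδα.symm) hne
        · exact hγα ▸ hcomp δ hδN
      · rcases Finset.mem_insert.mp hδ with hδα | hδN
        · exact hδα ▸ hsym _ _ (hcomp γ hγN)
        · exact hNp γ hγN δ hδN hne
    have h3v : ∀ γ ∈ insert α N, ¬ HasInit I γ v ∧ ¬ HasFin I γ v := by
      intro γ hγ
      constructor
      · rintro ⟨x, w', htei⟩
        have h1 : TraceEquiv I G u ((⟨α, aL⟩ : Letter L G) :: (⟨γ, x⟩ : Letter L G) ::
            (w' ++ [(⟨α, bL⟩ : Letter L G)])) := by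
          refine te_trans hte (te_cons _ ?_)
          exact te_append_right _ htei
        rcases Finset.mem_insert.mp hγ with rfl | hγ
        · obtain ⟨A, W, C, hd, hi⟩ := not_reduced_of_te_pair hirr hsym [] h1
          exact hu ⟨γ, aL, x, A, W, C, hd, hi⟩
        · have h2 : TraceEquiv I G u ((⟨γ, x⟩ : Letter L G) :: (⟨α, aL⟩ : Letter L G) ::
              (w' ++ [(⟨α, bL⟩ : Letter L G)])) :=
            te_trans h1 (te_of_step
              (TraceStep.swap [] (w' ++ [(⟨α, bL⟩ : Letter L G)]) ⟨α, aL⟩ ⟨γ, x⟩ (hcomp γ hγ)))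
          exact (hN3 γ hγ).1 ⟨x, _, h2⟩
      · rintro ⟨x, w', htef⟩
        have h1 : TraceEquiv I G u ((⟨α, aL⟩ : Letter L G) ::
            ((w' ++ [(⟨γ, x⟩ : Letter L G)]) ++ [(⟨α, bL⟩ : Letter L G)])) := by
          refine te_trans hte (te_cons _ ?_)
          exact te_append_right _ htef
        have e1 : (⟨α, aL⟩ : Letter L G) ::
            ((w' ++ [(⟨γ, x⟩ : Letter L G)]) ++ [(⟨α, bL⟩ : Letter L G)]) =
            ((⟨α, aL⟩ : Letter L G) :: w') ++ (⟨γ, x⟩ : Letter L G) ::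
              (⟨α, bL⟩ : Letter L G) :: [] := by simp
        rw [e1] at h1
        rcases Finset.mem_insert.mp hγ with rfl | hγ
        · obtain ⟨A, W, C, hd, hi⟩ :=
            not_reduced_of_te_pair hirr hsym ((⟨γ, aL⟩ : Letter L G) :: w') h1
          exact hu ⟨γ, x, bL, A, W, C, hd, hi⟩
        · have h2 : TraceEquiv I G u (((⟨α, aL⟩ : Letter L G) :: w') ++
              (⟨α, bL⟩ : Letter L G) :: (⟨γ, x⟩ : Letter L G) :: []) :=
            te_trans h1 (te_of_step
              (TraceStep.swap ((⟨α, aL⟩ : Letter L G) :: w') [] ⟨γ, x⟩ ⟨α, bL⟩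
                (hsym _ _ (hcomp γ hγ))))
          have e2 : ((⟨α, aL⟩ : Letter L G) :: w') ++
              (⟨α, bL⟩ : Letter L G) :: (⟨γ, x⟩ : Letter L G) :: [] =
              ((⟨α, aL⟩ : Letter L G) :: (w' ++ [(⟨α, bL⟩ : Letter L G)])) ++
                [(⟨γ, x⟩ : Letter L G)] := by simp
          rw [e2] at h2
          exact (hN3 γ hγ).2 ⟨x, _, h2⟩
    have h4v : ∀ (γ : L), (∀ δ ∈ insert α N, I γ δ) →
        ∀ (x x' : {g : G γ // g ≠ 1}) (w : List (Letter L G)),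
        TraceEquiv I G v ((⟨γ, x⟩ : Letter L G) :: (w ++ [(⟨γ, x'⟩ : Letter L G)])) →
        (x' : G γ) * (x : G γ) ≠ 1 := by
      intro γ hγc x x' w htev
      have hγα : I γ α := hγc α (Finset.mem_insert_self α N)
      have h1 : TraceEquiv I G u ((⟨α, aL⟩ : Letter L G) ::
          (((⟨γ, x⟩ : Letter L G) :: (w ++ [(⟨γ, x'⟩ : Letter L G)])) ++
            [(⟨α, bL⟩ : Letter L G)])) :=
        te_trans hte (te_cons _ (te_append_right _ htev))
      have e1 : (⟨α, aL⟩ : Letter L G) ::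
          (((⟨γ, x⟩ : Letter L G) :: (w ++ [(⟨γ, x'⟩ : Letter L G)])) ++
            [(⟨α, bL⟩ : Letter L G)]) =
          [] ++ (⟨α, aL⟩ : Letter L G) :: (⟨γ, x⟩ : Letter L G) ::
            (w ++ (⟨γ, x'⟩ : Letter L G) :: (⟨α, bL⟩ : Letter L G) :: []) := by simp
      rw [e1] at h1
      have h2 : TraceEquiv I G u ([] ++ (⟨γ, x⟩ : Letter L G) :: (⟨α, aL⟩ : Letter L G) ::
          (w ++ (⟨γ, x'⟩ : Letter L G) :: (⟨α, bL⟩ : Letter L G) :: [])) :=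
        te_trans h1 (te_of_step (TraceStep.swap [] _ ⟨α, aL⟩ ⟨γ, x⟩ (hsym _ _ hγα)))
      have e2 : [] ++ (⟨γ, x⟩ : Letter L G) :: (⟨α, aL⟩ : Letter L G) ::
          (w ++ (⟨γ, x'⟩ : Letter L G) :: (⟨α, bL⟩ : Letter L G) :: []) =
          ((⟨γ, x⟩ : Letter L G) :: (⟨α, aL⟩ : Letter L G) :: w) ++
            (⟨γ, x'⟩ : Letter L G) :: (⟨α, bL⟩ : Letter L G) :: [] := by simp
      rw [e2] at h2
      have h3 : TraceEquiv I G u (((⟨γ, x⟩ : Letter L G) :: (⟨α, aL⟩ : Letter L G) :: w) ++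
          (⟨α, bL⟩ : Letter L G) :: (⟨γ, x'⟩ : Letter L G) :: []) :=
        te_trans h2 (te_of_step
          (TraceStep.swap ((⟨γ, x⟩ : Letter L G) :: (⟨α, aL⟩ : Letter L G) :: w) []
            ⟨γ, x'⟩ ⟨α, bL⟩ hγα))
      have e3 : ((⟨γ, x⟩ : Letter L G) :: (⟨α, aL⟩ : Letter L G) :: w) ++
          (⟨α, bL⟩ : Letter L G) :: (⟨γ, x'⟩ : Letter L G) :: [] =
          (⟨γ, x⟩ : Letter L G) :: (((⟨α, aL⟩ : Letter L G) ::
            (w ++ [(⟨α, bL⟩ : Letter L G)])) ++ [(⟨γ, x'⟩ : Letter L G)]) := by simp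
      rw [e3] at h3
      exact hN4 γ (fun δ hδ => hγc δ (Finset.mem_insert_of_mem hδ)) x x' _ h3
    obtain ⟨M₀, a₀, b₀, m, hMp, hMN', hba₀, hteV, hG5, hG6⟩ :=
      ihn v.length hvlen v rfl hvred (insert α N) hN'p h3v h4v
    have hαM₀ : α ∉ M₀ := fun h => (hMN' α h α (Finset.mem_insert_self α N)).1 rfl
    have hMpair : ∀ γ ∈ insert α M₀, ∀ δ ∈ insert α M₀, γ ≠ δ → I γ δ := by
      intro γ hγ δ hδ hne
      rcases Finset.mem_insert.mp hγ with hγα | hγM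
      · rcases Finset.mem_insert.mp hδ with hδα | hδM
        · exact absurd (hγα.trans hδα.symm) hne
        · exact hγα ▸ hsym _ _ (hMN' δ hδM α (Finset.mem_insert_self α N)).2
      · rcases Finset.mem_insert.mp hδ with hδα | hδM
        · exact hδα ▸ (hMN' γ hγM α (Finset.mem_insert_self α N)).2
        · exact hMp γ hγM δ hδM hne
    refine ⟨insert α M₀, extFam α aL M₀ a₀, extFam α bL M₀ b₀, m, hMpair, ?_, ?_, ?_, ?_, ?_⟩
    · intro γ hγ δ hδ
      rcases Finset.mem_insert.mp hγ with hγα | hγM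
      · refine ⟨fun e => hαN (by rw [hγα.symm.trans e] at hαN ⊢; exact hδ), hγα ▸ hcomp δ hδ⟩
      · exact hMN' γ hγM δ (Finset.mem_insert_of_mem hδ)
    · intro γ h
      by_cases e : γ = α
      · subst e
        rw [extFam_self, extFam_self]
        exact hN4 γ hcomp aL bL v hte
      · have hγM₀ : γ ∈ M₀ := (Finset.mem_insert.mp h).resolve_left e
        rw [extFam_ne h e hγM₀, extFam_ne h e hγM₀]
        exact hba₀ γ hγM₀
    · -- the trace equivalence
      have hra : TraceEquiv I G (listOf (insert α M₀) (extFam α aL M₀ a₀))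
          ((⟨α, aL⟩ : Letter L G) :: listOf M₀ a₀) := by
        have hperm := listOf_insert_perm hαM₀ (extFam α aL M₀ a₀)
        rw [extFam_self] at hperm
        have he : listOf M₀ (fun γ h => extFam α aL M₀ a₀ γ (Finset.mem_insert_of_mem h)) =
            listOf M₀ a₀ :=
          listOf_congr (fun γ hγ => extFam_ne _ (fun e => hαM₀ (by rw [← e]; exact hγ)) hγ)
        rw [he] at hperm
        refine te_of_perm hperm (listOf_nodes_nodup _ _) ?_
        intro x hx y hy hxy
        exact hMpair x.1 (mem_listOf_fst hx) y.1 (mem_listOf_fst hy) hxy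
      have hrb : TraceEquiv I G (listOf (insert α M₀) (extFam α bL M₀ b₀))
          (listOf M₀ b₀ ++ [(⟨α, bL⟩ : Letter L G)]) := by
        have hperm := listOf_insert_perm hαM₀ (extFam α bL M₀ b₀)
        rw [extFam_self] at hperm
        have he : listOf M₀ (fun γ h => extFam α bL M₀ b₀ γ (Finset.mem_insert_of_mem h)) =
            listOf M₀ b₀ :=
          listOf_congr (fun γ hγ => extFam_ne _ (fun e => hαM₀ (by rw [← e]; exact hγ)) hγ)
        rw [he] at hperm
        have hperm2 : (listOf (insert α M₀) (extFam α bL M₀ b₀)).Perm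
            (listOf M₀ b₀ ++ [(⟨α, bL⟩ : Letter L G)]) :=
          hperm.trans (List.perm_append_singleton _ _).symm
        refine te_of_perm hperm2 (listOf_nodes_nodup _ _) ?_
        intro x hx y hy hxy
        exact hMpair x.1 (mem_listOf_fst hx) y.1 (mem_listOf_fst hy) hxy
      have h1 : TraceEquiv I G u ((⟨α, aL⟩ : Letter L G) ::
          ((listOf M₀ a₀ ++ m ++ listOf M₀ b₀) ++ [(⟨α, bL⟩ : Letter L G)])) :=
        te_trans hte (te_cons _ (te_append_right _ hteV))
      have e1 : (⟨α, aL⟩ : Letter L G) ::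
          ((listOf M₀ a₀ ++ m ++ listOf M₀ b₀) ++ [(⟨α, bL⟩ : Letter L G)]) =
          ((⟨α, aL⟩ : Letter L G) :: listOf M₀ a₀) ++ m ++
            (listOf M₀ b₀ ++ [(⟨α, bL⟩ : Letter L G)]) := by simp
      rw [e1] at h1
      refine te_trans h1 (te_symm ?_)
      exact te_append (te_append hra (te_refl m)) hrb
    · intro γ hγ
      apply hG5
      rcases hγ with hγ | hγ
      · exact Or.inl (Finset.mem_insert_of_mem hγ)
      · rcases Finset.mem_insert.mp hγ with hγα | hγM
        · exact Or.inl (hγα ▸ Finset.mem_insert_self α N)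
        · exact Or.inr hγM
    · intro γ hγc
      apply hG6
      intro δ hδ
      rcases hδ with hδ | hδM
      · rcases Finset.mem_insert.mp hδ with hδα | hδN
        · exact hδα ▸ hγc α (Or.inr (Finset.mem_insert_self α M₀))
        · exact hγc δ (Or.inl hδN)
      · exact hγc δ (Or.inr (Finset.mem_insert_of_mem hδM))
  · -- terminal case : no compatible pinch
    have hte0 : TraceEquiv I G u
        (listOf (G := G) (∅ : Finset L) (fun γ h => absurd h (Finset.notMem_empty γ)) ++ u ++
         listOf (G := G) (∅ : Finset L) (fun γ h => absurd h (Finset.notMem_empty γ))) := by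
      rw [listOf_empty]
      simpa using te_refl u
    refine ⟨∅, fun γ h => absurd h (Finset.notMem_empty γ),
      fun γ h => absurd h (Finset.notMem_empty γ), u, by simp, by simp, ?_, hte0, ?_, ?_⟩
    · intro γ h; exact absurd h (Finset.notMem_empty γ)
    · intro γ hγ
      rcases hγ with hγ | hγ
      · exact hN3 γ hγ
      · exact absurd hγ (Finset.notMem_empty γ)
    · intro γ hγc
      rintro ⟨x, x', w, htep⟩
      exact hp ⟨γ, x, x', w, fun δ hδ => hγc δ (Or.inl hδ), htep⟩

end CRD
namespace CRD

variable {L : Type} {I : L → L → Prop} {G : L → Type} [∀ α, Group (G α)] [DecidableEq L]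

theorem not_two_same_node {c : List (Letter L G)} (h : (c.map Sigma.fst).Nodup)
    {γ : L} {y y' : {g : G γ // g ≠ 1}} {X W Y : List (Letter L G)}
    (e : c = X ++ (⟨γ, y⟩ : Letter L G) :: (W ++ (⟨γ, y'⟩ : Letter L G) :: Y)) : False := by
  subst e
  simp [List.nodup_append] at h

theorem mem_M_of_mem_c {M : Finset L} {f : ∀ γ ∈ M, {g : G γ // g ≠ 1}}
    {l : Letter L G} (h : l ∈ listOf M f) : l.1 ∈ M := mem_listOf_fst h

/-- Main assembly for the non-cancelling case. -/
theorem final_noncancel (hirr : ∀ α, ¬ I α α) (hsym : ∀ α β, I α β → I β α)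
    {u : List (Letter L G)} (hu : Reduced I G u)
    (hc : ¬ ∃ (α : L) (x x' : {g : G α // g ≠ 1}) (w : List (Letter L G)),
      TraceEquiv I G u ((⟨α, x⟩ : Letter L G) :: (w ++ [(⟨α, x'⟩ : Letter L G)])) ∧
      (x' : G α) * (x : G α) = 1)
    {M : Finset L} {a b : ∀ γ ∈ M, {g : G γ // g ≠ 1}} {m : List (Letter L G)}
    (hMp : ∀ γ ∈ M, ∀ δ ∈ M, γ ≠ δ → I γ δ)
    (hba : ∀ γ (h : γ ∈ M), (b γ h : G γ) * (a γ h : G γ) ≠ 1)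
    (hteu : TraceEquiv I G u (listOf M a ++ m ++ listOf M b))
    (hG5 : ∀ γ, (γ ∈ (∅ : Finset L) ∨ γ ∈ M) → ¬ HasInit I γ m ∧ ¬ HasFin I γ m)
    (hG6 : ∀ γ, (∀ δ, (δ ∈ (∅ : Finset L) ∨ δ ∈ M) → I γ δ) → ¬ Pinch I γ m) :
    Reduced I G (m ++ listOf M (fun γ h => ⟨(b γ h : G γ) * (a γ h : G γ), hba γ h⟩)) ∧
    ¬ ∃ (γ : L) (x x' : {g : G γ // g ≠ 1}) (w : List (Letter L G)),
      TraceEquiv I G (m ++ listOf M (fun γ h => ⟨(b γ h : G γ) * (a γ h : G γ), hba γ h⟩))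
        ((⟨γ, x⟩ : Letter L G) :: (w ++ [(⟨γ, x'⟩ : Letter L G)])) := by
  set c := listOf M (fun γ h =>
    (⟨(b γ h : G γ) * (a γ h : G γ), hba γ h⟩ : {g : G γ // g ≠ 1})) with hcdef
  have hcnodes : c.map Sigma.fst = M.toList := listOf_map_fst M _
  have hcnodup : (c.map Sigma.fst).Nodup := by rw [hcnodes]; exact M.nodup_toList
  have hfull : Reduced I G (listOf M a ++ m ++ listOf M b) := reduced_te hirr hsym hteu hu
  have hmred : Reduced I G m := reduced_factor hfull
  constructor
  · -- Reduced (m ++ c)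
    rintro ⟨β, y, y', X, W, Y, hdec, hIW⟩
    rcases split_cut hdec with ⟨T, h1, h2⟩ | ⟨T, h1, h2⟩
    · -- whole window inside c
      exact not_two_same_node hcnodup h2
    · -- m = X ++ T
      cases T with
      | nil =>
          simp at h2
          exact not_two_same_node hcnodup (X := ([] : List (Letter L G)))
            (by simpa using h2.symm)
      | cons f T' =>
          have hf : f = (⟨β, y⟩ : Letter L G) := by
            have := congrArg (fun l => l.head?) h2; simpa using this.symm
          subst hf
          have h2' : W ++ (⟨β, y'⟩ : Letter L G) :: Y = T' ++ c := by
            have := congrArg List.tail h2; simpa using this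
          have hfin : ∀ (T'' : List (Letter L G)), (∀ l ∈ T'', I l.1 β) →
              m = X ++ (⟨β, y⟩ : Letter L G) :: T'' → β ∈ M → False := by
            intro T'' hT'' hm hβM
            refine (hG5 β (Or.inr hβM)).2 ⟨y, X ++ T'', ?_⟩
            rw [hm]
            exact te_push_back hT''
          rcases split_cut h2' with ⟨S, h3, h4⟩ | ⟨S, h3, h4⟩
          · cases S with
            | nil =>
                simp at h3 h4
                have hβM : β ∈ M := by
                  have : β ∈ c.map Sigma.fst := by rw [← h4]; simp
                  rw [hcnodes] at this; exact Finset.mem_toList.mp this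
                exact hfin W hIW (by rw [h1, h3]) hβM
            | cons g S' =>
                have hg : g = (⟨β, y'⟩ : Letter L G) := by
                  have := congrArg (fun l => l.head?) h4; simpa using this.symm
                subst hg
                refine hmred ⟨β, y, y', X, W, S', ?_, hIW⟩
                rw [h1, h3]
          · -- W = T' ++ S, c = S ++ y' :: Y
            have hβM : β ∈ M := by
              have : β ∈ c.map Sigma.fst := by rw [h4]; simp
              rw [hcnodes] at this; exact Finset.mem_toList.mp this
            refine hfin T' (fun l hl => hIW l (by rw [h3]; simp [hl])) (by rw [h1]) hβM
  · -- no pinch in m ++ c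
    rintro ⟨γ, x, x', w, htep⟩
    obtain ⟨A, B, hAB, hA, hte1⟩ := extract_head hsym htep
    obtain ⟨A₁, B₁, hAB₁, hB₁, -⟩ := extract_last hsym hte1
    -- unify : m ++ c = A ++ x :: (T ++ x' :: B₁) with A ⟂ γ and B₁ ⟂ γ
    obtain ⟨T, hm2⟩ : ∃ T, m ++ c = A ++ (⟨γ, x⟩ : Letter L G) ::
        (T ++ (⟨γ, x'⟩ : Letter L G) :: B₁) := by
      rcases split_cut hAB₁ with ⟨T, h1, h2⟩ | ⟨T, h1, h2⟩
      · exact ⟨T, by rw [hAB, h2]⟩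
      · cases T with
        | nil =>
            simp at h2
            exact ⟨[], by rw [hAB, ← h2]; simp⟩
        | cons f T' =>
            have hf : f = (⟨γ, x'⟩ : Letter L G) := by
              have := congrArg (fun l => l.head?) h2; simpa using this.symm
            exfalso
            refine hirr γ ?_
            have : I f.1 γ := hA f (by rw [h1]; simp)
            rw [hf] at this; exact this
    by_cases hγM : γ ∈ M
    · -- γ ∈ M : the first γ-letter must lie in m, giving HasInit
      rcases split_cut hm2 with ⟨S, h1, h2⟩ | ⟨S, h1, h2⟩
      · exact not_two_same_node hcnodup h2
      · cases S with
        | nil =>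
            simp at h2
            exact not_two_same_node hcnodup (X := ([] : List (Letter L G)))
              (by simpa using h2.symm)
        | cons f S' =>
            have hf : f = (⟨γ, x⟩ : Letter L G) := by
              have := congrArg (fun l => l.head?) h2; simpa using this.symm
            subst hf
            refine (hG5 γ (Or.inr hγM)).1 ⟨x, A ++ S', ?_⟩
            rw [h1]
            exact te_pull_front hA
    · -- γ ∉ M : both pinch letters lie in m, giving a pinch of m
      have hnotc : ∀ (l : Letter L G), l ∈ c → l.1 ≠ γ := by
        intro l hl he
        exact hγM (he ▸ mem_listOf_fst hl)
      rcases split_cut hm2 with ⟨S, h1, h2⟩ | ⟨S, h1, h2⟩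
      · exact hnotc (⟨γ, x⟩ : Letter L G) (by rw [h2]; simp) rfl
      · cases S with
        | nil =>
            simp at h2
            exact hnotc (⟨γ, x⟩ : Letter L G) (by rw [← h2]; simp) rfl
        | cons f S' =>
            have hf : f = (⟨γ, x⟩ : Letter L G) := by
              have := congrArg (fun l => l.head?) h2; simpa using this.symm
            subst hf
            have h2' : T ++ (⟨γ, x'⟩ : Letter L G) :: B₁ = S' ++ c := by
              have := congrArg List.tail h2; simpa using this
            rcases split_cut h2' with ⟨R, h3, h4⟩ | ⟨R, h3, h4⟩
            · cases R with
              | nil =>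
                  simp at h4
                  exact hnotc (⟨γ, x'⟩ : Letter L G) (by rw [← h4]; simp) rfl
              | cons g R' =>
                  have hg : g = (⟨γ, x'⟩ : Letter L G) := by
                    have := congrArg (fun l => l.head?) h4; simpa using this.symm
                  subst hg
                  have h4' : B₁ = R' ++ c := by
                    have := congrArg List.tail h4; simpa using this
                  -- m = A ++ x :: (T ++ x' :: R')
                  have hmdec : m = A ++ (⟨γ, x⟩ : Letter L G) ::
                      (T ++ (⟨γ, x'⟩ : Letter L G) :: R') := by
                    rw [h1, h3]
                  have hcompat : ∀ δ, (δ ∈ (∅ : Finset L) ∨ δ ∈ M) → I γ δ := by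
                    intro δ hδ
                    rcases hδ with hδ | hδ
                    · exact absurd hδ (Finset.notMem_empty δ)
                    · obtain ⟨l, hl, hlδ⟩ := fst_mem_listOf
                        (fun γ h => (⟨(b γ h : G γ) * (a γ h : G γ), hba γ h⟩ :
                          {g : G γ // g ≠ 1})) hδ
                      have : I l.1 γ := hB₁ l (by rw [h4']; exact List.mem_append_right _ (by rw [hcdef]; exact hl))
                      rw [hlδ] at this
                      exact hsym _ _ this
                  refine hG6 γ hcompat ⟨x, x', A ++ T ++ R', ?_⟩
                  rw [hmdec]
                  have s1 : TraceEquiv I G (A ++ (⟨γ, x⟩ : Letter L G) ::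
                      (T ++ (⟨γ, x'⟩ : Letter L G) :: R'))
                      ((⟨γ, x⟩ : Letter L G) :: (A ++ (T ++ (⟨γ, x'⟩ : Letter L G) :: R'))) :=
                    te_pull_front hA
                  refine te_trans s1 (te_cons _ ?_)
                  have hR' : ∀ l ∈ R', I l.1 γ := fun l hl => hB₁ l (by rw [h4']; simp [hl])
                  have s2 : TraceEquiv I G ((A ++ T) ++ (⟨γ, x'⟩ : Letter L G) :: R')
                      (((A ++ T) ++ R') ++ [(⟨γ, x'⟩ : Letter L G)]) := te_push_back hR'
                  have e1 : A ++ (T ++ (⟨γ, x'⟩ : Letter L G) :: R') =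
                      (A ++ T) ++ (⟨γ, x'⟩ : Letter L G) :: R' := by simp
                  have e2 : ((A ++ T) ++ R') ++ [(⟨γ, x'⟩ : Letter L G)] =
                      (A ++ T ++ R') ++ [(⟨γ, x'⟩ : Letter L G)] := by simp
                  rw [e1, ← e2]
                  exact s2
            · exact hnotc (⟨γ, x'⟩ : Letter L G) (by rw [h4]; simp) rfl

end CRD
theorem exists_cyclically_reduced_conjugate_decomposition
    {L : Type} [Finite L] [DecidableEq L]
    (I : L → L → Prop) (G : L → Type) [∀ α, Group (G α)]
    (hirr : ∀ α, ¬ I α α) (hsym : ∀ α β, I α β → I β α)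
    (u : List (Letter L G)) (hu : Reduced I G u) :
    ∃ (p r m s : List (Letter L G)) (M : Finset L)
      (a b : (α : L) → α ∈ M → {g : G α // g ≠ 1})
      (hba : ∀ (α : L) (h : α ∈ M), (b α h : G α) * (a α h : G α) ≠ 1)
      (c : List (Letter L G)),
      c = M.toList.attach.map (fun x =>
        (⟨x.1, ⟨(b x.1 (Finset.mem_toList.mp x.2) : G x.1) *
               (a x.1 (Finset.mem_toList.mp x.2) : G x.1),
               hba x.1 (Finset.mem_toList.mp x.2)⟩⟩ : Letter L G)) ∧
      Reduced I G p ∧ Reduced I G r ∧ Reduced I G m ∧ Reduced I G s ∧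
      (∀ α ∈ M, ∀ β ∈ M, α ≠ β → I α β) ∧
      TraceEquiv I G u (p ++ r ++ m ++ s ++ wordInv G p) ∧
      TraceEquiv I G r (M.toList.attach.map (fun x =>
        (⟨x.1, a x.1 (Finset.mem_toList.mp x.2)⟩ : Letter L G))) ∧
      TraceEquiv I G s (M.toList.attach.map (fun x =>
        (⟨x.1, b x.1 (Finset.mem_toList.mp x.2)⟩ : Letter L G))) ∧
      IsCyclicallyReduced I G (m ++ c) ∧
      IsConj (evalWord I G u) (evalWord I G (m ++ c)) := by
  suffices h : ∀ (n : ℕ) (u : List (Letter L G)), u.length = n → Reduced I G u →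
      ∃ (p r m s : List (Letter L G)) (M : Finset L)
        (a b : (α : L) → α ∈ M → {g : G α // g ≠ 1})
        (hba : ∀ (α : L) (h : α ∈ M), (b α h : G α) * (a α h : G α) ≠ 1)
        (c : List (Letter L G)),
        c = M.toList.attach.map (fun x =>
          (⟨x.1, ⟨(b x.1 (Finset.mem_toList.mp x.2) : G x.1) *
                 (a x.1 (Finset.mem_toList.mp x.2) : G x.1),
                 hba x.1 (Finset.mem_toList.mp x.2)⟩⟩ : Letter L G)) ∧
        Reduced I G p ∧ Reduced I G r ∧ Reduced I G m ∧ Reduced I G s ∧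
        (∀ α ∈ M, ∀ β ∈ M, α ≠ β → I α β) ∧
        TraceEquiv I G u (p ++ r ++ m ++ s ++ wordInv G p) ∧
        TraceEquiv I G r (M.toList.attach.map (fun x =>
          (⟨x.1, a x.1 (Finset.mem_toList.mp x.2)⟩ : Letter L G))) ∧
        TraceEquiv I G s (M.toList.attach.map (fun x =>
          (⟨x.1, b x.1 (Finset.mem_toList.mp x.2)⟩ : Letter L G))) ∧
        IsCyclicallyReduced I G (m ++ c) ∧
        IsConj (evalWord I G u) (evalWord I G (m ++ c)) by
    exact h u.length u rfl hu
  intro n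
  induction n using Nat.strong_induction_on with
  | _ n ihn =>
  intro u hlen hu
  by_cases hc : ∃ (α : L) (x x' : {g : G α // g ≠ 1}) (w : List (Letter L G)),
      TraceEquiv I G u ((⟨α, x⟩ : Letter L G) :: (w ++ [(⟨α, x'⟩ : Letter L G)])) ∧
      (x' : G α) * (x : G α) = 1
  · -- a cancelling pinch : peel it into p
    obtain ⟨α, xL, xL', w, hte, hcan⟩ := hc
    have hured2 : Reduced I G ((⟨α, xL⟩ : Letter L G) ::
        (w ++ [(⟨α, xL'⟩ : Letter L G)])) := CRD.reduced_te hirr hsym hte hu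
    have hwred : Reduced I G w := by
      have e2 : (⟨α, xL⟩ : Letter L G) :: (w ++ [(⟨α, xL'⟩ : Letter L G)]) =
          [(⟨α, xL⟩ : Letter L G)] ++ w ++ [(⟨α, xL'⟩ : Letter L G)] := by simp
      exact CRD.reduced_factor (e2 ▸ hured2)
    have hwlen : w.length < n := by
      have := CRD.te_length hte; simp at this; omega
    obtain ⟨p, r, m, s, M, a, b, hba, c, hcdef, hpred, hrred, hmred, hsred, hpair,
      hteu, hter, htes, hcyc, hconj⟩ := ihn w.length hwlen w rfl hwred
    have hx' : (xL' : G α) = (xL : G α)⁻¹ := eq_inv_of_mul_eq_one_left hcan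
    have hinv : (⟨α, xL'⟩ : Letter L G) = letterInv G (⟨α, xL⟩ : Letter L G) :=
      congrArg (Sigma.mk α) (Subtype.ext hx')
    have hteu' : TraceEquiv I G u ((⟨α, xL⟩ : Letter L G) ::
        ((p ++ r ++ m ++ s ++ wordInv G p) ++ [(⟨α, xL'⟩ : Letter L G)])) :=
      CRD.te_trans hte (CRD.te_cons _ (CRD.te_append_right _ hteu))
    have hwi : wordInv G ((⟨α, xL⟩ : Letter L G) :: p) =
        wordInv G p ++ [letterInv G (⟨α, xL⟩ : Letter L G)] := by
      simp [wordInv]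
    refine ⟨(⟨α, xL⟩ : Letter L G) :: p, r, m, s, M, a, b, hba, c, hcdef, ?_, hrred,
      hmred, hsred, hpair, ?_, hter, htes, hcyc, ?_⟩
    · -- Reduced (x :: p)
      have hured3 : Reduced I G ((⟨α, xL⟩ : Letter L G) ::
          ((p ++ r ++ m ++ s ++ wordInv G p) ++ [(⟨α, xL'⟩ : Letter L G)])) :=
        CRD.reduced_te hirr hsym hteu' hu
      have e3 : (⟨α, xL⟩ : Letter L G) ::
          ((p ++ r ++ m ++ s ++ wordInv G p) ++ [(⟨α, xL'⟩ : Letter L G)]) =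
          [] ++ ((⟨α, xL⟩ : Letter L G) :: p) ++
            (r ++ m ++ s ++ wordInv G p ++ [(⟨α, xL'⟩ : Letter L G)]) := by simp
      exact CRD.reduced_factor (e3 ▸ hured3)
    · -- the trace equivalence for u
      have e4 : (⟨α, xL⟩ : Letter L G) ::
          ((p ++ r ++ m ++ s ++ wordInv G p) ++ [(⟨α, xL'⟩ : Letter L G)]) =
          ((⟨α, xL⟩ : Letter L G) :: p) ++ r ++ m ++ s ++
            wordInv G ((⟨α, xL⟩ : Letter L G) :: p) := by
        rw [hwi, ← hinv]; simp
      exact e4 ▸ hteu'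
    · -- conjugacy
      have h1 : evalWord I G u = gpOf I G α (xL : G α) * evalWord I G w *
          gpOf I G α (xL' : G α) := by
        rw [CRD.te_eval hte]
        simp [CRD.evalWord_cons, CRD.evalWord_append, evalWord, mul_assoc]
      have h2 : IsConj (evalWord I G w) (evalWord I G u) := by
        rw [isConj_iff]
        refine ⟨gpOf I G α (xL : G α), ?_⟩
        rw [h1, hx', map_inv]
      exact (h2.symm.trans hconj)
  · -- no cancelling pinch : use the main structure theorem
    have h4 : ∀ (γ : L), (∀ δ ∈ (∅ : Finset L), I γ δ) →
        ∀ (x x' : {g : G γ // g ≠ 1}) (w : List (Letter L G)),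
        TraceEquiv I G u ((⟨γ, x⟩ : Letter L G) :: (w ++ [(⟨γ, x'⟩ : Letter L G)])) →
        (x' : G γ) * (x : G γ) ≠ 1 := by
      intro γ _ x x' w hte2 heq
      exact hc ⟨γ, x, x', w, hte2, heq⟩
    obtain ⟨M, a, b, m, hMp, -, hba, hteu, hG5, hG6⟩ :=
      CRD.main2 hirr hsym u.length u rfl hu ∅ (by simp) (by simp) h4
    have hfinal := CRD.final_noncancel hirr hsym hu hc hMp hba hteu hG5 hG6
    set c := CRD.listOf M (fun γ h =>
      (⟨(b γ h : G γ) * (a γ h : G γ), hba γ h⟩ : {g : G γ // g ≠ 1})) with hcdef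
    have hfull : Reduced I G (CRD.listOf M a ++ m ++ CRD.listOf M b) :=
      CRD.reduced_te hirr hsym hteu hu
    refine ⟨[], CRD.listOf M a, m, CRD.listOf M b, M, a, b, hba, c, rfl,
      CRD.reduced_nil, CRD.reduced_listOf M a, CRD.reduced_factor hfull,
      CRD.reduced_listOf M b, hMp, ?_, CRD.te_refl _, CRD.te_refl _, ?_, ?_⟩
    · have e : ([] : List (Letter L G)) ++ CRD.listOf M a ++ m ++ CRD.listOf M b ++
          wordInv G ([] : List (Letter L G)) =
          CRD.listOf M a ++ m ++ CRD.listOf M b := by simp [wordInv]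
      rw [e]
      exact hteu
    · -- cyclically reduced
      refine ⟨hfinal.1, ?_⟩
      rintro ⟨γ, x, x', w, htep⟩
      exact hfinal.2 ⟨γ, x, x', w, htep⟩
    · -- conjugacy
      have he : evalWord I G u = evalWord I G (CRD.listOf M a) * evalWord I G m *
          evalWord I G (CRD.listOf M b) := by
        rw [CRD.te_eval hteu, CRD.evalWord_append, CRD.evalWord_append]
      have hsr : evalWord I G (CRD.listOf M b) * evalWord I G (CRD.listOf M a) =
          evalWord I G c := CRD.eval_listOf_mul M hMp a b hba
      rw [isConj_iff]
      refine ⟨(evalWord I G (CRD.listOf M a))⁻¹, ?_⟩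
      rw [he, CRD.evalWord_append]
      rw [← hsr]
      group
end
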